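/- arXiv:1805.00511 — 4 statements merged into one kernel-verified Lean document; each statement's English description precedes it below -/
import Mathlib

section
/- Let n ≥ 1 and let c_1, …, c_n be integers with 0 ≤ c_1 ≤ c_2 ≤ ⋯ ≤ c_n ≤ n. Then for every real number x, ∏_{i=1}^n (x + c_i − i + 1) = Σ_{k=0}^n h_k(B) · C(x + k, n), where B = B(c_1,…,c_n). -/
/-- Generalized binomial coefficient `C(x, m) = (1/m!)·∏_{j=0}^{m-1} (x - j)`. -/
noncomputable def genChoose (x : ℝ) (m : ℕ) : ℝ :=
  (∏ j ∈ Finset.range m, (x - (j : ℝ))) / (m.factorial : ℝ)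
/-- `h_k(B)`: the number of placements of `n` nonattacking rooks on the `n × n` grid
(identified with permutations `σ`, a rook in column `i` and row `σ(i)`, rows and columns
1-indexed via `Fin n` being 0-indexed) having exactly `k` rooks on the Ferrers board
whose `i`-th column has height `c i`; the rook in column `i` is on the board iff
`σ(i) ≤ c i` as 1-indexed rows, i.e. `(σ i : ℤ) < c i` in 0-indexed terms. -/
noncomputable def hB (n : ℕ) (c : Fin n → ℤ) (k : ℕ) : ℕ :=
  Nat.card {σ : Equiv.Perm (Fin n) //
    (Finset.univ.filter (fun i => ((σ i : ℕ) : ℤ) < c i)).card = k}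

open Finset

/-- falling factorial -/
noncomputable def ffall (x : ℝ) (m : ℕ) : ℝ := ∏ j ∈ Finset.range m, (x - (j : ℝ))

lemma genChoose_eq (x : ℝ) (m : ℕ) : genChoose x m = ffall x m / (m.factorial : ℝ) := rfl

lemma ffall_succ (x : ℝ) (m : ℕ) : ffall x (m+1) = ffall x m * (x - m) :=
  Finset.prod_range_succ _ _

lemma genChoose_mul_factorial (x : ℝ) (m : ℕ) :
    genChoose x m * (m.factorial : ℝ) = ffall x m := by
  rw [genChoose_eq, div_mul_cancel₀]
  exact_mod_cast m.factorial_ne_zero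

lemma genChoose_pascal (x : ℝ) (m : ℕ) :
    genChoose (x+1) (m+1) = genChoose x (m+1) + genChoose x m := by
  have h1 : ffall (x+1) (m+1) = ffall x m * (x+1) := by
    rw [ffall, Finset.prod_range_succ']
    have e1 : ∀ j ∈ Finset.range m, (x + 1 - ((j+1 : ℕ) : ℝ)) = x - j := by
      intro j _; push_cast; ring
    rw [Finset.prod_congr rfl e1]
    norm_num [ffall]
  have h2 : ffall x (m+1) = ffall x m * (x - m) := ffall_succ x m
  rw [genChoose_eq, genChoose_eq, genChoose_eq, h1, h2]
  have hm : (m.factorial : ℝ) ≠ 0 := by exact_mod_cast m.factorial_ne_zero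
  have hm1 : ((m+1).factorial : ℝ) ≠ 0 := by exact_mod_cast (m+1).factorial_ne_zero
  rw [Nat.factorial_succ] at *
  push_cast at hm1 ⊢
  field_simp
  ring

lemma genChoose_succ_eq (x : ℝ) (m : ℕ) :
    genChoose (x+1) m = genChoose x m + if m = 0 then 0 else genChoose x (m-1) := by
  cases m with
  | zero => simp [genChoose]
  | succ k => simpa using genChoose_pascal x k

lemma genChoose_vandermonde (n d : ℕ) (x : ℝ) :
    genChoose (x + d) n = ∑ j ∈ Finset.range (n+1), (d.choose j : ℝ) * genChoose x (n - j) := by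
  induction d generalizing x with
  | zero =>
    rw [Finset.sum_eq_single 0]
    · simp
    · intro j hj hj0
      rw [Nat.choose_eq_zero_of_lt (by omega)]; simp
    · simp
  | succ d ih =>
    have h1 : x + (d+1 : ℕ) = (x + 1) + d := by push_cast; ring
    rw [h1, ih]
    have h2 : ∀ j ∈ Finset.range (n+1), (d.choose j : ℝ) * genChoose (x+1) (n - j)
        = (d.choose j : ℝ) * genChoose x (n-j)
          + (d.choose j : ℝ) * (if n - j = 0 then 0 else genChoose x (n-j-1)) := by
      intro j _
      rw [genChoose_succ_eq]; ring
    rw [Finset.sum_congr rfl h2, Finset.sum_add_distrib]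
    -- second sum: drop the j = n term
    have h3 : ∑ j ∈ Finset.range (n+1), (d.choose j : ℝ) * (if n - j = 0 then 0 else genChoose x (n-j-1))
        = ∑ j ∈ Finset.range n, (d.choose j : ℝ) * genChoose x (n-j-1) := by
      rw [Finset.sum_range_succ]
      have e0 : (d.choose n : ℝ) * (if n - n = 0 then 0 else genChoose x (n-n-1)) = 0 := by simp
      rw [e0, add_zero]
      apply Finset.sum_congr rfl
      intro j hj
      rw [if_neg (by simp at hj; omega)]
    rw [h3]
    -- LHS target: peel first term
    rw [Finset.sum_range_succ' (fun j => ((d+1).choose j : ℝ) * genChoose x (n - j)) n]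
    rw [Finset.sum_range_succ' (fun j => (d.choose j : ℝ) * genChoose x (n - j)) n]
    have h4 : ∀ j, ((d+1).choose (j+1) : ℝ) = (d.choose (j+1) : ℝ) + (d.choose j : ℝ) := by
      intro j
      rw [Nat.choose_succ_succ']
      push_cast; ring
    have h5 : ∀ j ∈ Finset.range n, ((d+1).choose (j+1) : ℝ) * genChoose x (n - (j+1))
        = (d.choose (j+1) : ℝ) * genChoose x (n - (j+1)) + (d.choose j : ℝ) * genChoose x (n-j-1) := by
      intro j _
      rw [h4]
      have : n - (j+1) = n - j - 1 := by omega
      rw [this]; ring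
    rw [Finset.sum_congr rfl h5, Finset.sum_add_distrib]
    simp [Nat.choose]
    ring


lemma card_perm_fix {α : Type*} [Fintype α] [DecidableEq α] (S : Finset α) :
    (Finset.univ.filter (fun σ : Equiv.Perm α => ∀ i ∈ S, σ i = i)).card
      = (Fintype.card α - S.card).factorial := by
  classical
  rw [← Fintype.card_subtype]
  have e1 : {σ : Equiv.Perm α // ∀ i ∈ S, σ i = i}
      ≃ {σ : Equiv.Perm α // ∀ a, ¬(a ∉ S) → σ a = a} :=
    Equiv.subtypeEquivRight (by
      intro σ; constructor
      · intro h a ha; exact h a (by simpa using ha)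
      · intro h a ha; exact h a (by simpa using ha))
  have e2 : {σ : Equiv.Perm α // ∀ a, ¬(a ∉ S) → σ a = a}
      ≃ Equiv.Perm {a // a ∉ S} := (Equiv.Perm.subtypeEquivSubtypePerm (fun a => a ∉ S)).symm
  rw [Fintype.card_congr (e1.trans e2), Fintype.card_perm]
  congr 1
  rw [Fintype.card_subtype_compl]
  congr 1
  exact Fintype.card_coe S

lemma exists_perm_extend {α : Type*} [Fintype α] [DecidableEq α] (S : Finset α) (g : α → α)
    (hg : Set.InjOn g (S : Set α)) :
    ∃ σ₀ : Equiv.Perm α, ∀ i ∈ S, σ₀ i = g i := by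
  classical
  set T : Finset α := S.image g with hT
  have hcard : Sᶜ.card = Tᶜ.card := by
    rw [Finset.card_compl, Finset.card_compl, Finset.card_image_of_injOn hg]
  let e := Finset.equivOfCardEq hcard
  let F : α → α := fun i => if h : i ∈ S then g i else (e ⟨i, Finset.mem_compl.mpr h⟩ : α)
  have hmemT : ∀ (i : α) (h : i ∉ S), ((e ⟨i, Finset.mem_compl.mpr h⟩ : α)) ∉ T := by
    intro i h
    have := (e ⟨i, Finset.mem_compl.mpr h⟩).2
    exact Finset.mem_compl.mp this
  have hFinj : Function.Injective F := by
    intro i j hij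
    simp only [F] at hij
    by_cases hi : i ∈ S <;> by_cases hj : j ∈ S
    · rw [dif_pos hi, dif_pos hj] at hij; exact hg hi hj hij
    · rw [dif_pos hi, dif_neg hj] at hij
      have hmem := Finset.mem_image_of_mem g hi
      rw [hij] at hmem
      exact absurd hmem (hmemT j hj)
    · rw [dif_neg hi, dif_pos hj] at hij
      have hmem := Finset.mem_image_of_mem g hj
      rw [← hij] at hmem
      exact absurd hmem (hmemT i hi)
    · rw [dif_neg hi, dif_neg hj] at hij
      exact Subtype.ext_iff.mp (e.injective (Subtype.ext hij))
  refine ⟨Equiv.ofBijective F (Finite.injective_iff_bijective.mp hFinj), fun i hi => ?_⟩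
  simp only [Equiv.ofBijective_apply, F, dif_pos hi]

lemma card_perm_extend {α : Type*} [Fintype α] [DecidableEq α] (S : Finset α) (g : α → α)
    (hg : Set.InjOn g (S : Set α)) :
    (Finset.univ.filter (fun σ : Equiv.Perm α => ∀ i ∈ S, σ i = g i)).card
      = (Fintype.card α - S.card).factorial := by
  classical
  obtain ⟨σ₀, hσ₀⟩ := exists_perm_extend S g hg
  rw [← card_perm_fix S]
  apply Finset.card_bij (fun σ _ => σ₀⁻¹ * σ)
  · intro σ hσ
    simp only [Finset.mem_filter, Finset.mem_univ, true_and] at hσ ⊢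
    intro i hi
    simp [Equiv.Perm.mul_apply, hσ i hi, ← hσ₀ i hi]
  · intro a _ b _ h
    exact mul_left_cancel h
  · intro τ hτ
    simp only [Finset.mem_filter, Finset.mem_univ, true_and] at hτ
    refine ⟨σ₀ * τ, ?_, by group⟩
    simp only [Finset.mem_filter, Finset.mem_univ, true_and]
    intro i hi
    simp [Equiv.Perm.mul_apply, hτ i hi, hσ₀ i hi]

def isPlc (n : ℕ) (c : ℕ → ℕ) (P : Finset (ℕ × ℕ)) : Prop :=
  (∀ p ∈ P, p.1 < n ∧ p.2 < c p.1) ∧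
  (∀ p ∈ P, ∀ q ∈ P, p.1 = q.1 → p = q) ∧
  (∀ p ∈ P, ∀ q ∈ P, p.2 = q.2 → p = q)

instance (n : ℕ) (c : ℕ → ℕ) : DecidablePred (isPlc n c) := fun P => by
  unfold isPlc; infer_instance

def plc (n m : ℕ) (c : ℕ → ℕ) : Finset (Finset (ℕ × ℕ)) :=
  ((Finset.range n ×ˢ Finset.range m).powerset).filter (isPlc n c)

lemma mem_plc {n m : ℕ} {c : ℕ → ℕ} {P : Finset (ℕ × ℕ)} :
    P ∈ plc n m c ↔ P ⊆ Finset.range n ×ˢ Finset.range m ∧ isPlc n c P := by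
  simp [plc]

lemma plc_card_le {n m : ℕ} {c : ℕ → ℕ} {P : Finset (ℕ × ℕ)} (hP : P ∈ plc n m c) :
    P.card ≤ n := by
  obtain ⟨-, hb, hcol, -⟩ := mem_plc.mp hP
  have hinj : Set.InjOn Prod.fst (P : Set (ℕ × ℕ)) := fun p hp q hq h => hcol p hp q hq h
  calc P.card = (P.image Prod.fst).card := (Finset.card_image_of_injOn hinj).symm
    _ ≤ (Finset.range n).card := Finset.card_le_card (by
        intro a ha
        obtain ⟨p, hp, rfl⟩ := Finset.mem_image.mp ha
        exact Finset.mem_range.mpr (hb p hp).1)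
    _ = n := Finset.card_range n

lemma sum_plc (m : ℕ) (c : ℕ → ℕ) :
    ∀ n, (∀ a b, a ≤ b → b < n → c a ≤ c b) → (∀ a, a < n → c a ≤ m) →
    ∀ x : ℝ, ∑ P ∈ plc n m c, ffall x (n - P.card) = ∏ a ∈ Finset.range n, (x + (c a : ℝ) - (a : ℝ)) := by
  intro n
  induction n with
  | zero =>
    intro _ _ x
    have : plc 0 m c = {∅} := by
      ext P
      simp only [mem_plc, Finset.mem_singleton, isPlc]
      constructor
      · rintro ⟨hsub, -⟩
        rw [Finset.eq_empty_iff_forall_notMem]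
        intro p hp
        have := hsub hp
        simp at this
      · rintro rfl; simp
    simp [this, ffall]
  | succ n ih =>
    intro hmono hcm x
    have hmono' : ∀ a b, a ≤ b → b < n → c a ≤ c b := fun a b h1 h2 => hmono a b h1 (by omega)
    have hcm' : ∀ a, a < n → c a ≤ m := fun a h => hcm a (by omega)
    have maps : ∀ P ∈ plc (n+1) m c, P.filter (fun p => p.1 < n) ∈ plc n m c := by
      intro P hP
      obtain ⟨hsub, hb, hcol, hrow⟩ := mem_plc.mp hP
      refine mem_plc.mpr ⟨?_, ?_, ?_, ?_⟩
      · intro p hp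
        obtain ⟨hpP, hplt⟩ := Finset.mem_filter.mp hp
        have := hsub hpP
        simp only [Finset.mem_product, Finset.mem_range] at this ⊢
        exact ⟨hplt, this.2⟩
      · intro p hp
        obtain ⟨hpP, hplt⟩ := Finset.mem_filter.mp hp
        exact ⟨hplt, (hb p hpP).2⟩
      · intro p hp q hq h
        exact hcol p (Finset.mem_filter.mp hp).1 q (Finset.mem_filter.mp hq).1 h
      · intro p hp q hq h
        exact hrow p (Finset.mem_filter.mp hp).1 q (Finset.mem_filter.mp hq).1 h
    have fiber_eq : ∀ P' ∈ plc n m c,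
        (plc (n+1) m c).filter (fun P => P.filter (fun p => p.1 < n) = P')
          = insert P' (((Finset.range (c n)) \ (P'.image Prod.snd)).image
              (fun b => insert (n, b) P')) := by
      intro P' hP'
      obtain ⟨hsub', hb', hcol', hrow'⟩ := mem_plc.mp hP'
      have hlt' : ∀ p ∈ P', p.1 < n := fun p hp => (hb' p hp).1
      have hnotmem' : ∀ b : ℕ, (n, b) ∉ P' := by
        intro b hb
        exact absurd (hlt' _ hb) (lt_irrefl n)
      have hfilter' : P'.filter (fun p => p.1 < n) = P' :=
        Finset.filter_eq_self.mpr (fun p hp => hlt' p hp)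
      ext P
      rw [Finset.mem_filter, Finset.mem_insert]
      constructor
      · rintro ⟨hP, hφ⟩
        obtain ⟨hsub, hb, hcol, hrow⟩ := mem_plc.mp hP
        by_cases hex : ∃ b, (n, b) ∈ P
        · obtain ⟨b, hbP⟩ := hex
          right
          rw [Finset.mem_image]
          refine ⟨b, Finset.mem_sdiff.mpr ⟨Finset.mem_range.mpr (hb _ hbP).2, ?_⟩, ?_⟩
          · intro hbrow
            obtain ⟨p, hpP', hpb⟩ := Finset.mem_image.mp hbrow
            have hpP : p ∈ P := by
              rw [← hφ] at hpP'
              exact (Finset.mem_filter.mp hpP').1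
            have hpeq : p = (n, b) := hrow p hpP (n, b) hbP hpb
            rw [hpeq] at hpP'
            exact hnotmem' b hpP'
          · symm
            ext p
            rw [Finset.mem_insert]
            constructor
            · intro hp
              by_cases hplt : p.1 < n
              · exact Or.inr (by rw [← hφ]; exact Finset.mem_filter.mpr ⟨hp, hplt⟩)
              · left
                have hp1 : p.1 = n := by
                  have := (hb p hp).1; omega
                exact hcol p hp (n, b) hbP hp1
            · rintro (rfl | hp)
              · exact hbP
              · rw [← hφ] at hp
                exact (Finset.mem_filter.mp hp).1
        · left
          rw [← hφ]
          symm
          apply Finset.filter_eq_self.mpr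
          intro p hp
          by_contra hplt
          have hp1 : p.1 = n := by have := (hb p hp).1; omega
          exact hex ⟨p.2, by rw [← hp1]; exact hp⟩
      · intro h
        rcases h with rfl | h
        · refine ⟨mem_plc.mpr ⟨?_, ?_, hcol', hrow'⟩, hfilter'⟩
          · intro p hp
            have := hsub' hp
            simp only [Finset.mem_product, Finset.mem_range] at this ⊢
            omega
          · intro p hp
            exact ⟨by have := hlt' p hp; omega, (hb' p hp).2⟩
        · obtain ⟨b, hball, rfl⟩ := Finset.mem_image.mp h
          obtain ⟨hbc, hbrow⟩ := Finset.mem_sdiff.mp hball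
          rw [Finset.mem_range] at hbc
          constructor
          · refine mem_plc.mpr ⟨?_, ?_, ?_, ?_⟩
            · intro p hp
              rcases Finset.mem_insert.mp hp with rfl | hp
              · simp only [Finset.mem_product, Finset.mem_range]
                exact ⟨by omega, by have := hcm n (by omega); omega⟩
              · have := hsub' hp
                simp only [Finset.mem_product, Finset.mem_range] at this ⊢
                omega
            · intro p hp
              rcases Finset.mem_insert.mp hp with rfl | hp
              · exact ⟨by omega, hbc⟩
              · exact ⟨by have := hlt' p hp; omega, (hb' p hp).2⟩
            · intro p hp q hq h
              rcases Finset.mem_insert.mp hp with rfl | hp <;>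
                rcases Finset.mem_insert.mp hq with rfl | hq
              · rfl
              · exfalso; have h1 := hlt' q hq; simp only at h; omega
              · exfalso; have h1 := hlt' p hp; simp only at h; omega
              · exact hcol' p hp q hq h
            · intro p hp q hq h
              rcases Finset.mem_insert.mp hp with rfl | hp <;>
                rcases Finset.mem_insert.mp hq with rfl | hq
              · rfl
              · exfalso; apply hbrow
                rw [show b = q.2 from h]
                exact Finset.mem_image_of_mem Prod.snd hq
              · exfalso; apply hbrow
                rw [show b = p.2 from h.symm]
                exact Finset.mem_image_of_mem Prod.snd hp
              · exact hrow' p hp q hq h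
          · rw [Finset.filter_insert, if_neg (by simp), hfilter']
    have main : ∀ P' ∈ plc n m c,
        ∑ P ∈ (plc (n+1) m c).filter (fun P => P.filter (fun p => p.1 < n) = P'),
          ffall x (n+1 - P.card)
        = ffall x (n - P'.card) * (x + (c n : ℝ) - (n : ℝ)) := by
      intro P' hP'
      obtain ⟨hsub', hb', hcol', hrow'⟩ := mem_plc.mp hP'
      have hlt' : ∀ p ∈ P', p.1 < n := fun p hp => (hb' p hp).1
      have hnotmem' : ∀ b : ℕ, (n, b) ∉ P' := by
        intro b hb
        exact absurd (hlt' _ hb) (lt_irrefl n)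
      have hrows_sub : P'.image Prod.snd ⊆ Finset.range (c n) := by
        intro b hb
        obtain ⟨p, hp, rfl⟩ := Finset.mem_image.mp hb
        exact Finset.mem_range.mpr (lt_of_lt_of_le (hb' p hp).2
          (hmono p.1 n (le_of_lt (hlt' p hp)) (by omega)))
      have hrows_card : (P'.image Prod.snd).card = P'.card :=
        Finset.card_image_of_injOn (fun p hp q hq h => hrow' p hp q hq h)
      have hjcn : P'.card ≤ c n := by
        rw [← hrows_card]
        simpa using Finset.card_le_card hrows_sub
      have hjn : P'.card ≤ n := plc_card_le hP'
      have hall_card : ((Finset.range (c n)) \ (P'.image Prod.snd)).card = c n - P'.card := by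
        rw [Finset.card_sdiff_of_subset hrows_sub, Finset.card_range, hrows_card]
      rw [fiber_eq P' hP']
      have hP'nm : P' ∉ ((Finset.range (c n)) \ (P'.image Prod.snd)).image
          (fun b => insert (n, b) P') := by
        intro h
        obtain ⟨b, -, hb⟩ := Finset.mem_image.mp h
        have : (n, b) ∈ P' := by rw [← hb]; exact Finset.mem_insert_self _ _
        exact hnotmem' b this
      rw [Finset.sum_insert hP'nm]
      have hinj : ∀ b₁ ∈ (Finset.range (c n)) \ (P'.image Prod.snd),
          ∀ b₂ ∈ (Finset.range (c n)) \ (P'.image Prod.snd),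
          insert (n, b₁) P' = insert (n, b₂) P' → b₁ = b₂ := by
        intro b₁ _ b₂ _ h
        have : (n, b₁) ∈ insert (n, b₂) P' := by rw [← h]; exact Finset.mem_insert_self _ _
        rcases Finset.mem_insert.mp this with h' | h'
        · exact (Prod.mk.injEq _ _ _ _ ▸ h').2
        · exact absurd h' (hnotmem' b₁)
      rw [Finset.sum_image hinj]
      have hcard_ins : ∀ b, (insert (n, b) P').card = P'.card + 1 := by
        intro b
        rw [Finset.card_insert_of_notMem (hnotmem' b)]
      have e1 : ∀ b ∈ (Finset.range (c n)) \ (P'.image Prod.snd),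
          ffall x (n+1 - (insert (n, b) P').card) = ffall x (n - P'.card) := by
        intro b _
        rw [hcard_ins b]
        congr 1
        omega
      rw [Finset.sum_congr rfl e1, Finset.sum_const, hall_card]
      have e2 : n + 1 - P'.card = (n - P'.card) + 1 := by omega
      rw [e2, ffall_succ]
      rw [nsmul_eq_mul, Nat.cast_sub hjcn]
      push_cast [Nat.cast_sub hjn]
      ring
    calc ∑ P ∈ plc (n+1) m c, ffall x (n+1 - P.card)
        = ∑ P' ∈ plc n m c, ∑ P ∈ (plc (n+1) m c).filter
            (fun P => P.filter (fun p => p.1 < n) = P'), ffall x (n+1 - P.card) :=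
          (Finset.sum_fiberwise_of_maps_to maps _).symm
      _ = ∑ P' ∈ plc n m c, ffall x (n - P'.card) * (x + (c n : ℝ) - (n : ℝ)) :=
          Finset.sum_congr rfl main
      _ = (∑ P' ∈ plc n m c, ffall x (n - P'.card)) * (x + (c n : ℝ) - (n : ℝ)) :=
          (Finset.sum_mul _ _ _).symm
      _ = ∏ a ∈ Finset.range (n+1), (x + (c a : ℝ) - (a : ℝ)) := by
          rw [ih hmono' hcm' x, Finset.prod_range_succ]

lemma card_perm_ext_plc (n : ℕ) (ct : ℕ → ℕ) (P : Finset (ℕ × ℕ)) (hP : P ∈ plc n n ct) :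
    (Finset.univ.filter (fun σ : Equiv.Perm (Fin n) =>
      ∀ i r : Fin n, ((i : ℕ), (r : ℕ)) ∈ P → σ i = r)).card
    = (n - P.card).factorial := by
  obtain ⟨hsub, hb, hcol, hrow⟩ := mem_plc.mp hP
  set S : Finset (Fin n) :=
    Finset.univ.filter (fun i : Fin n => ∃ r : Fin n, ((i:ℕ),(r:ℕ)) ∈ P) with hS
  set g : Fin n → Fin n :=
    fun i => if h : ∃ r : Fin n, ((i:ℕ),(r:ℕ)) ∈ P then h.choose else i with hg
  have hgmem : ∀ i ∈ S, ((i:ℕ), ((g i):ℕ)) ∈ P := by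
    intro i hi
    have h := (Finset.mem_filter.mp hi).2
    rw [hg]
    simp only [dif_pos h]
    exact h.choose_spec
  have hgInj : Set.InjOn g (S : Set (Fin n)) := by
    intro i₁ h₁ i₂ h₂ heq
    have m₁ := hgmem i₁ (Finset.mem_coe.mp h₁)
    have m₂ := hgmem i₂ (Finset.mem_coe.mp h₂)
    have h2 : ((i₁:ℕ), ((g i₁):ℕ)) = ((i₂:ℕ), ((g i₂):ℕ)) :=
      hrow _ m₁ _ m₂ (by rw [heq])
    exact Fin.val_injective (congrArg Prod.fst h2)
  have hfe : (Finset.univ.filter (fun σ : Equiv.Perm (Fin n) =>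
      ∀ i r : Fin n, ((i : ℕ), (r : ℕ)) ∈ P → σ i = r))
      = (Finset.univ.filter (fun σ : Equiv.Perm (Fin n) => ∀ i ∈ S, σ i = g i)) := by
    apply Finset.filter_congr
    intro σ _
    constructor
    · intro h i hi
      exact h i (g i) (hgmem i hi)
    · intro h i r hir
      have hiS : i ∈ S := Finset.mem_filter.mpr ⟨Finset.mem_univ _, ⟨r, hir⟩⟩
      have h2 : ((i:ℕ), ((g i):ℕ)) = ((i:ℕ), (r:ℕ)) :=
        hcol _ (hgmem i hiS) _ hir rfl
      rw [h i hiS]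
      exact Fin.val_injective (congrArg Prod.snd h2)
  have hScard : S.card = P.card := by
    apply Finset.card_bij (fun (i : Fin n) (_ : i ∈ S) => ((i : ℕ), ((g i : Fin n) : ℕ)))
    · intro i hi; exact hgmem i hi
    · intro i₁ h₁ i₂ h₂ heq
      exact Fin.val_injective (congrArg Prod.fst heq)
    · intro p hp
      have hpb : p.1 < n ∧ p.2 < n := by
        have := hsub hp
        simp only [Finset.mem_product, Finset.mem_range] at this
        exact this
      have hp' : (((⟨p.1, hpb.1⟩ : Fin n) : ℕ), ((⟨p.2, hpb.2⟩ : Fin n) : ℕ)) ∈ P := by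
        simpa using hp
      have hiS : (⟨p.1, hpb.1⟩ : Fin n) ∈ S :=
        Finset.mem_filter.mpr ⟨Finset.mem_univ _, ⟨⟨p.2, hpb.2⟩, hp'⟩⟩
      refine ⟨⟨p.1, hpb.1⟩, hiS, ?_⟩
      have := hcol _ (hgmem _ hiS) _ hp' rfl
      simpa using this
  rw [hfe]
  convert card_perm_extend S g hgInj using 2
  · ext σ
    simp only [Finset.mem_filter]
  · rw [Fintype.card_fin, hScard]

lemma sum_choose_bridge (n : ℕ) (c : Fin n → ℤ) (j : ℕ) :
    ∑ σ : Equiv.Perm (Fin n),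
        ((Finset.univ.filter (fun i => ((σ i : ℕ) : ℤ) < c i)).card).choose j
      = ((plc n n (fun a => if h : a < n then (c ⟨a,h⟩).toNat else 0)).filter
          (fun P => P.card = j)).card * (n - j).factorial := by
  set ct : ℕ → ℕ := fun a => if h : a < n then (c ⟨a,h⟩).toNat else 0 with hctdef
  have hct_eq : ∀ i : Fin n, ct (i : ℕ) = (c i).toNat := by
    intro i
    rw [hctdef]
    simp only [dif_pos i.isLt, Fin.eta]
  set hits : Equiv.Perm (Fin n) → Finset (Fin n) :=
    fun σ => Finset.univ.filter (fun i => ((σ i : ℕ) : ℤ) < c i) with hhits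
  set Q : Finset (Equiv.Perm (Fin n) × Finset (Fin n)) :=
    Finset.univ.filter (fun st => st.2 ⊆ hits st.1 ∧ st.2.card = j) with hQ
  set ψ : Equiv.Perm (Fin n) × Finset (Fin n) → Finset (ℕ × ℕ) :=
    fun st => st.2.image (fun i : Fin n => ((i : ℕ), ((st.1 i : Fin n) : ℕ))) with hψ
  set plcj : Finset (Finset (ℕ × ℕ)) := (plc n n ct).filter (fun P => P.card = j) with hplcj
  -- Step A
  have stepA : ∑ σ : Equiv.Perm (Fin n), ((hits σ).card).choose j = Q.card := by
    rw [Finset.card_eq_sum_card_fiberwise (f := Prod.fst) (t := Finset.univ)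
      (fun st _ => Finset.mem_univ _)]
    apply Finset.sum_congr rfl
    intro σ _
    rw [← Finset.card_powersetCard j (hits σ)]
    apply Finset.card_bij
      (fun (T : Finset (Fin n)) (_ : T ∈ Finset.powersetCard j (hits σ)) => (σ, T))
    · intro T hT
      rw [Finset.mem_powersetCard] at hT
      exact Finset.mem_filter.mpr ⟨Finset.mem_filter.mpr ⟨Finset.mem_univ _, hT.1, hT.2⟩, rfl⟩
    · intro T₁ h₁ T₂ h₂ heq
      exact congrArg Prod.snd heq
    · rintro ⟨σ', T⟩ hT
      obtain ⟨hQmem, h1⟩ := Finset.mem_filter.mp hT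
      obtain ⟨-, hsub, hcard⟩ := Finset.mem_filter.mp hQmem
      simp only at h1
      subst h1
      exact ⟨T, Finset.mem_powersetCard.mpr ⟨hsub, hcard⟩, rfl⟩
  -- Step B
  have maps : ∀ st ∈ Q, ψ st ∈ plcj := by
    rintro ⟨σ, T⟩ hst
    obtain ⟨-, hsub, hcard⟩ := Finset.mem_filter.mp hst
    have himg_inj : Set.InjOn (fun i : Fin n => ((i:ℕ), ((σ i):ℕ))) (T : Set (Fin n)) := by
      intro i₁ _ i₂ _ heq
      exact Fin.val_injective (congrArg Prod.fst heq)
    refine Finset.mem_filter.mpr ⟨mem_plc.mpr ⟨?_, ?_, ?_, ?_⟩, ?_⟩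
    · intro p hp
      obtain ⟨i, -, rfl⟩ := Finset.mem_image.mp hp
      simp only [Finset.mem_product, Finset.mem_range]
      exact ⟨i.isLt, (σ i).isLt⟩
    · intro p hp
      obtain ⟨i, hiT, rfl⟩ := Finset.mem_image.mp hp
      refine ⟨i.isLt, ?_⟩
      have hhit := hsub hiT
      have hlt := (Finset.mem_filter.mp hhit).2
      show ((σ i : Fin n) : ℕ) < ct (i : ℕ)
      rw [hct_eq i]
      exact Int.lt_toNat.mpr hlt
    · intro p hp q hq h
      obtain ⟨i₁, -, rfl⟩ := Finset.mem_image.mp hp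
      obtain ⟨i₂, -, rfl⟩ := Finset.mem_image.mp hq
      rw [Fin.val_injective h]
    · intro p hp q hq h
      obtain ⟨i₁, -, rfl⟩ := Finset.mem_image.mp hp
      obtain ⟨i₂, -, rfl⟩ := Finset.mem_image.mp hq
      rw [σ.injective (Fin.val_injective h)]
    · have hc : (ψ (σ, T)).card = T.card := Finset.card_image_of_injOn himg_inj
      rw [hc, hcard]
  have fiber : ∀ P ∈ plcj, (Q.filter (fun st => ψ st = P)).card = (n - j).factorial := by
    intro P hP
    obtain ⟨hPplc, hPcard⟩ := Finset.mem_filter.mp hP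
    obtain ⟨hsub, hb, hcol, hrow⟩ := mem_plc.mp hPplc
    have hbound : ∀ p ∈ P, p.1 < n ∧ p.2 < n := by
      intro p hp
      have := hsub hp
      simp only [Finset.mem_product, Finset.mem_range] at this
      exact this
    rw [← hPcard, ← card_perm_ext_plc n ct P hPplc]
    apply Finset.card_bij (fun st (_ : st ∈ Q.filter (fun st => ψ st = P)) => st.1)
    · rintro ⟨σ, T⟩ hst
      obtain ⟨hstQ, hstP⟩ := Finset.mem_filter.mp hst
      refine Finset.mem_filter.mpr ⟨Finset.mem_univ _, ?_⟩
      intro i r hir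
      rw [← hstP] at hir
      obtain ⟨i', hi'T, heq⟩ := Finset.mem_image.mp hir
      have hi : i' = i := Fin.val_injective (congrArg Prod.fst heq)
      rw [hi] at heq
      exact Fin.val_injective (congrArg Prod.snd heq)
    · rintro ⟨σ₁, T₁⟩ h₁ ⟨σ₂, T₂⟩ h₂ heq
      simp only at heq
      subst heq
      have key : ∀ (T : Finset (Fin n)), ((σ₁, T) ∈ Q.filter (fun st => ψ st = P)) →
          T = Finset.univ.filter (fun i : Fin n => (i:ℕ) ∈ P.image Prod.fst) := by
        intro T hT
        obtain ⟨-, hTP⟩ := Finset.mem_filter.mp hT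
        ext i
        rw [Finset.mem_filter]
        constructor
        · intro hi
          refine ⟨Finset.mem_univ _, ?_⟩
          rw [← hTP]
          exact Finset.mem_image_of_mem Prod.fst (Finset.mem_image_of_mem _ hi)
        · rintro ⟨-, hi⟩
          obtain ⟨p, hp, hp1⟩ := Finset.mem_image.mp hi
          rw [← hTP] at hp
          obtain ⟨i', hi'T, heq'⟩ := Finset.mem_image.mp hp
          have hii : i' = i := Fin.val_injective (by rw [← hp1, ← heq'])
          rwa [← hii]
      have hT12 : T₁ = T₂ := (key T₁ h₁).trans (key T₂ h₂).symm
      rw [hT12]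
    · intro σ hσ
      have hσ2 := (Finset.mem_filter.mp hσ).2
      set T : Finset (Fin n) :=
        Finset.univ.filter (fun i : Fin n => (i:ℕ) ∈ P.image Prod.fst) with hT
      have hψeq : ψ (σ, T) = P := by
        apply Finset.Subset.antisymm
        · intro p hp
          obtain ⟨i, hiT, rfl⟩ := Finset.mem_image.mp hp
          have hi := (Finset.mem_filter.mp hiT).2
          obtain ⟨⟨q1, q2⟩, hq, hq1⟩ := Finset.mem_image.mp hi
          simp only at hq1
          subst hq1
          have hqb := hbound _ hq
          have hq' : ((i:ℕ), ((⟨q2, hqb.2⟩ : Fin n) : ℕ)) ∈ P := hq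
          have hσi := hσ2 i ⟨q2, hqb.2⟩ hq'
          show ((i:ℕ), ((σ i : Fin n) : ℕ)) ∈ P
          rw [hσi]
          exact hq'
        · intro p hp
          have hpb := hbound p hp
          have hp' : (((⟨p.1, hpb.1⟩ : Fin n) : ℕ), ((⟨p.2, hpb.2⟩ : Fin n) : ℕ)) ∈ P := by
            simpa using hp
          have hσp := hσ2 _ _ hp'
          have hiT : (⟨p.1, hpb.1⟩ : Fin n) ∈ T := by
            refine Finset.mem_filter.mpr ⟨Finset.mem_univ _, ?_⟩
            exact Finset.mem_image.mpr ⟨p, hp, rfl⟩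
          have hpe : p = ((((⟨p.1, hpb.1⟩ : Fin n)) : ℕ), ((σ ⟨p.1, hpb.1⟩ : Fin n) : ℕ)) := by
            rw [hσp]
          rw [hpe]
          exact Finset.mem_image_of_mem _ hiT
      refine ⟨(σ, T), Finset.mem_filter.mpr ⟨?_, hψeq⟩, rfl⟩
      refine Finset.mem_filter.mpr ⟨Finset.mem_univ _, ?_, ?_⟩
      · intro i hiT
        have hmem : ((i:ℕ), ((σ i):ℕ)) ∈ P := by
          rw [← hψeq]
          exact Finset.mem_image_of_mem _ hiT
        have hbP := (hb _ hmem).2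
        have hbP' : ((σ i : Fin n) : ℕ) < ct (i : ℕ) := hbP
        rw [hct_eq i] at hbP'
        exact Finset.mem_filter.mpr ⟨Finset.mem_univ _, Int.lt_toNat.mp hbP'⟩
      · have himg_inj : Set.InjOn (fun i : Fin n => ((i:ℕ), ((σ i):ℕ))) (T : Set (Fin n)) := by
          intro i₁ _ i₂ _ heq
          exact Fin.val_injective (congrArg Prod.fst heq)
        have hc : (ψ (σ, T)).card = T.card := Finset.card_image_of_injOn himg_inj
        rw [hψeq] at hc
        rw [← hc, hPcard]
  have stepB : Q.card = plcj.card * (n - j).factorial := by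
    rw [Finset.card_eq_sum_card_fiberwise maps]
    rw [Finset.sum_congr rfl fiber, Finset.sum_const, smul_eq_mul]
  exact stepA.trans (stepB.trans rfl)


/-- Goldman–Joichi–White, hit polynomial form. For integers
`0 ≤ c 1 ≤ ⋯ ≤ c n ≤ n` and every real `x`,
`∏_{i=1}^n (x + c_i − i + 1) = Σ_{k=0}^n h_k(B) · C(x + k, n)`. -/
theorem statement0 (n : ℕ) (hn : 1 ≤ n) (c : Fin n → ℤ)
    (hc0 : ∀ i, 0 ≤ c i) (hmono : ∀ i j : Fin n, i ≤ j → c i ≤ c j)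
    (hcn : ∀ i, c i ≤ (n : ℤ)) (x : ℝ) :
    ∏ i : Fin n, (x + (c i : ℝ) - ((i : ℕ) : ℝ)) =
      ∑ k ∈ Finset.range (n + 1), (hB n c k : ℝ) * genChoose (x + (k : ℝ)) n := by
  classical
  set D : Equiv.Perm (Fin n) → ℕ :=
    fun σ => (Finset.univ.filter (fun i => ((σ i : ℕ) : ℤ) < c i)).card with hD
  have hDle : ∀ σ, D σ ≤ n := by
    intro σ
    calc D σ ≤ Finset.univ.card := Finset.card_filter_le _ _
      _ = n := by simp
  set ct : ℕ → ℕ := fun a => if h : a < n then (c ⟨a,h⟩).toNat else 0 with hctdef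
  have hct_eq : ∀ i : Fin n, ct (i : ℕ) = (c i).toNat := by
    intro i
    rw [hctdef]
    simp only [dif_pos i.isLt, Fin.eta]
  -- Step 1 : group permutations by hit number
  have hBcard : ∀ k, (hB n c k : ℕ)
      = (Finset.univ.filter (fun σ : Equiv.Perm (Fin n) => D σ = k)).card := by
    intro k
    rw [hB, Nat.card_eq_fintype_card, Fintype.card_subtype]
  have step1 : ∑ k ∈ Finset.range (n + 1), (hB n c k : ℝ) * genChoose (x + (k : ℝ)) n
      = ∑ σ : Equiv.Perm (Fin n), genChoose (x + (D σ : ℝ)) n := by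
    rw [← Finset.sum_fiberwise_of_maps_to (g := D) (t := Finset.range (n+1))
      (fun σ _ => Finset.mem_range.mpr (Nat.lt_succ_of_le (hDle σ)))
      (fun σ => genChoose (x + (D σ : ℝ)) n)]
    apply Finset.sum_congr rfl
    intro k _
    rw [Finset.sum_congr rfl
      (fun σ hσ => by rw [(Finset.mem_filter.mp hσ).2]), Finset.sum_const, nsmul_eq_mul]
    rw [hBcard k]
  -- Step 2 : Vandermonde and the bridge to rook placements
  have step2 : ∑ σ : Equiv.Perm (Fin n), genChoose (x + (D σ : ℝ)) n
      = ∑ j ∈ Finset.range (n+1),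
          ((((plc n n ct).filter (fun P => P.card = j)).card * (n - j).factorial : ℕ) : ℝ)
            * genChoose x (n - j) := by
    rw [Finset.sum_congr rfl (fun σ _ => genChoose_vandermonde n (D σ) x)]
    rw [Finset.sum_comm]
    apply Finset.sum_congr rfl
    intro j _
    rw [← Finset.sum_mul]
    congr 1
    rw [← Nat.cast_sum]
    rw [Nat.cast_inj.mpr (sum_choose_bridge n c j)]
  -- Step 3 : GJW product formula for the placement sum
  have hmono_ct : ∀ a b, a ≤ b → b < n → ct a ≤ ct b := by
    intro a b hab hb
    have ha : a < n := lt_of_le_of_lt hab hb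
    rw [hctdef]
    simp only [dif_pos ha, dif_pos hb]
    exact Int.toNat_le_toNat (hmono ⟨a, ha⟩ ⟨b, hb⟩ hab)
  have hcm_ct : ∀ a, a < n → ct a ≤ n := by
    intro a ha
    rw [hctdef]
    simp only [dif_pos ha]
    exact Int.toNat_le.mpr (hcn ⟨a, ha⟩)
  have step3 : ∑ j ∈ Finset.range (n+1),
        ((((plc n n ct).filter (fun P => P.card = j)).card * (n - j).factorial : ℕ) : ℝ)
          * genChoose x (n - j)
      = ∏ i : Fin n, (x + (c i : ℝ) - ((i : ℕ) : ℝ)) := by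
    have e1 : ∀ j ∈ Finset.range (n+1),
        ((((plc n n ct).filter (fun P => P.card = j)).card * (n - j).factorial : ℕ) : ℝ)
            * genChoose x (n - j)
        = ∑ P ∈ (plc n n ct).filter (fun P => P.card = j), ffall x (n - P.card) := by
      intro j _
      rw [Finset.sum_congr rfl (fun P hP => by
        rw [(Finset.mem_filter.mp hP).2])]
      rw [Finset.sum_const, nsmul_eq_mul]
      push_cast
      rw [mul_assoc, mul_comm ((n-j).factorial : ℝ) (genChoose x (n-j)),
        genChoose_mul_factorial]
    rw [Finset.sum_congr rfl e1]
    rw [Finset.sum_fiberwise_of_maps_to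
      (fun P hP => Finset.mem_range.mpr (Nat.lt_succ_of_le (plc_card_le hP)))
      (fun P => ffall x (n - P.card))]
    rw [sum_plc n ct n hmono_ct hcm_ct x]
    rw [← Fin.prod_univ_eq_prod_range (fun a => x + (ct a : ℝ) - (a : ℝ)) n]
    apply Finset.prod_congr rfl
    intro i _
    have hcast : ((ct (i:ℕ) : ℕ) : ℝ) = ((c i : ℤ) : ℝ) := by
      rw [hct_eq i]
      exact_mod_cast congrArg (fun z : ℤ => (z : ℝ)) (Int.toNat_of_nonneg (hc0 i))
    rw [hcast]
  rw [step1, step2, step3]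
end

section
/- Let n ≥ 1 and let c_1, …, c_n be integers with 0 ≤ c_1 ≤ c_2 ≤ ⋯ ≤ c_n ≤ n. Then for every real number x, ∏_{i=1}^n (x + c_i − i + 1) = Σ_{k=0}^n r_{n−k}(B) · C(x, k) · k!, where B = B(c_1,…,c_n). -/
/-- `r_m(B)`: the number of placements of `m` nonattacking rooks on the Ferrers board
whose `i`-th column has height `c i`: pairs `(I, f)` with `I` an `m`-element set of
columns and `f` an injective choice of rows with `f(i) ≤ c i` (1-indexed rows). -/
noncomputable def rB (n : ℕ) (c : Fin n → ℤ) (m : ℕ) : ℕ :=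
  Nat.card {q : (s : Finset (Fin n)) × (↥s → Fin n) //
    q.1.card = m ∧ Function.Injective q.2 ∧ ∀ i, ((q.2 i : ℕ) : ℤ) < c i.1}



open Finset

def BP {ρ n : ℕ} (c : Fin n → ℤ) (m : ℕ) (g : Fin n → Option (Fin ρ)) : Prop :=
  (Finset.filter (fun i => g i ≠ none) Finset.univ).card = m ∧
    (∀ i j r, g i = some r → g j = some r → i = j) ∧
    ∀ i r, g i = some r → ((r : ℕ) : ℤ) < c i

noncomputable def Fcnt (ρ n : ℕ) (c : Fin n → ℤ) (m : ℕ) : ℕ :=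
  Nat.card {g : Fin n → Option (Fin ρ) // BP c m g}

lemma card_filter_last {n : ℕ} (p : Fin (n + 1) → Prop) [DecidablePred p] :
    (filter p univ).card
      = (filter (fun i : Fin n => p i.castSucc) univ).card + (if p (Fin.last n) then 1 else 0) := by
  rw [Finset.card_filter, Finset.card_filter, Fin.sum_univ_castSucc]

lemma Fcnt_zero (ρ n : ℕ) (c : Fin n → ℤ) : Fcnt ρ n c 0 = 1 := by
  classical
  haveI : Nonempty {g : Fin n → Option (Fin ρ) // BP c 0 g} :=
    ⟨⟨fun _ => none, by simp [BP]⟩⟩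
  haveI : Subsingleton {g : Fin n → Option (Fin ρ) // BP c 0 g} := by
    constructor
    rintro ⟨g, hg0, -, -⟩ ⟨g', hg0', -, -⟩
    have h : ∀ (h : Fin n → Option (Fin ρ)),
        (filter (fun i => h i ≠ none) univ).card = 0 → ∀ i, h i = none := by
      intro h hc i
      rw [Finset.card_eq_zero, Finset.filter_eq_empty_iff] at hc
      have := hc (Finset.mem_univ i)
      simpa using this
    apply Subtype.ext; funext i; show g i = g' i; rw [h g hg0 i, h g' hg0' i]
  exact Nat.card_unique

lemma Fcnt_eq_zero_of_lt {ρ n m : ℕ} (c : Fin n → ℤ) (h : n < m) : Fcnt ρ n c m = 0 := by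
  classical
  have : IsEmpty {g : Fin n → Option (Fin ρ) // BP c m g} := by
    constructor; rintro ⟨g, hcard, -, -⟩
    have h1 : (filter (fun i => g i ≠ none) univ).card ≤ n :=
      le_trans (Finset.card_filter_le _ _) (by simp)
    rw [hcard] at h1; omega
  rw [Fcnt]; exact Nat.card_of_isEmpty

lemma Fcnt_eq_zero_of_bound {ρ n m : ℕ} (c : Fin n → ℤ) (t : ℕ)
    (hc : ∀ i, c i ≤ (t : ℤ)) (ht : t < m) : Fcnt ρ n c m = 0 := by
  classical
  have : IsEmpty {g : Fin n → Option (Fin ρ) // BP c m g} := by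
    constructor; rintro ⟨g, hcard, hinj, hbd⟩
    have key : (filter (fun i => g i ≠ none) univ).card ≤ (Finset.range t).card := by
      apply Finset.card_le_card_of_injOn (fun i => ((g i).map (fun r : Fin ρ => (r : ℕ))).getD 0)
      · intro i hi
        rw [Finset.mem_coe, Finset.mem_filter] at hi
        obtain ⟨r, hr⟩ := Option.ne_none_iff_exists'.1 hi.2
        have hb := hbd i r hr
        simp only [Finset.mem_coe, hr]
        simp only [Option.map_some, Option.getD_some, Finset.mem_range]
        have hct := hc i
        omega
      · intro i hi j hj hij
        rw [Finset.mem_coe, Finset.mem_filter] at hi hj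
        obtain ⟨r, hr⟩ := Option.ne_none_iff_exists'.1 hi.2
        obtain ⟨r', hr'⟩ := Option.ne_none_iff_exists'.1 hj.2
        simp only [hr, hr', Option.map_some, Option.getD_some] at hij
        have : r = r' := Fin.ext hij
        exact hinj i j r hr (by rw [hr', this])
    rw [hcard, Finset.card_range] at key; omega
  rw [Fcnt]; exact Nat.card_of_isEmpty

-- case A bijection
lemma caseA (ρ n m : ℕ) (c : Fin (n + 1) → ℤ) :
    Nat.card {q : {g : Fin (n + 1) → Option (Fin ρ) // BP c m g} // q.1 (Fin.last n) = none}
      = Fcnt ρ n (fun i => c i.castSucc) m := by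
  classical
  have hBPA : ∀ (g : Fin (n + 1) → Option (Fin ρ)), BP c m g → g (Fin.last n) = none →
      BP (fun i => c i.castSucc) m (fun i => g i.castSucc) := by
    rintro g ⟨h1, h2, h3⟩ hL
    refine ⟨?_, ?_, ?_⟩
    · rw [card_filter_last (fun i => g i ≠ none), if_neg (by simp [hL])] at h1
      simpa using h1
    · intro i j r hi hj
      exact Fin.castSucc_injective n (h2 _ _ _ hi hj)
    · intro i r hi
      exact h3 _ _ hi
  refine Nat.card_eq_of_bijective
    (fun q => ⟨fun i => q.1.1 i.castSucc, hBPA q.1.1 q.1.2 q.2⟩) ⟨?_, ?_⟩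
  · rintro q q' h
    have h1 : ∀ i : Fin n, q.1.1 i.castSucc = q'.1.1 i.castSucc :=
      fun i => congrFun (congrArg Subtype.val h) i
    apply Subtype.ext; apply Subtype.ext; funext i
    induction i using Fin.lastCases with
    | last => rw [q.2, q'.2]
    | cast i => exact h1 i
  · rintro ⟨g', hg1, hg2, hg3⟩
    have hBP : BP c m (Fin.lastCases none g') := by
      refine ⟨?_, ?_, ?_⟩
      · rw [card_filter_last (fun i => Fin.lastCases none g' i ≠ none)]
        simp only [Fin.lastCases_castSucc, Fin.lastCases_last, ne_eq, not_true_eq_false,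
          if_false, add_zero]
        simpa using hg1
      · intro i j r hi hj
        induction i using Fin.lastCases with
        | last => simp only [Fin.lastCases_last] at hi; cases hi
        | cast i =>
          induction j using Fin.lastCases with
          | last => simp only [Fin.lastCases_last] at hj; cases hj
          | cast j =>
            simp only [Fin.lastCases_castSucc] at hi hj
            exact congrArg Fin.castSucc (hg2 _ _ _ hi hj)
      · intro i r hi
        induction i using Fin.lastCases with
        | last => simp only [Fin.lastCases_last] at hi; cases hi
        | cast i =>
          simp only [Fin.lastCases_castSucc] at hi
          exact hg3 _ _ hi
    refine ⟨⟨⟨Fin.lastCases none g', hBP⟩, by simp⟩, ?_⟩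
    apply Subtype.ext; funext i
    simp [Fin.lastCases_castSucc]

-- case B bijection
lemma caseB (ρ n m : ℕ) (c : Fin (n + 1) → ℤ) :
    Nat.card {q : {g : Fin (n + 1) → Option (Fin ρ) // BP c (m + 1) g} //
        ¬ q.1 (Fin.last n) = none}
      = Nat.card {z : (Fin n → Option (Fin ρ)) × Fin ρ //
          BP (fun i => c i.castSucc) m z.1 ∧ ((z.2 : ℕ) : ℤ) < c (Fin.last n) ∧
            ∀ i, z.1 i ≠ some z.2} := by
  classical
  have hfwd : ∀ (g : Fin (n + 1) → Option (Fin ρ)), BP c (m + 1) g →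
      ∀ r, g (Fin.last n) = some r →
      BP (fun i => c i.castSucc) m (fun i => g i.castSucc) ∧ ((r : ℕ) : ℤ) < c (Fin.last n) ∧
        ∀ i : Fin n, g i.castSucc ≠ some r := by
    rintro g ⟨h1, h2, h3⟩ r hr
    refine ⟨⟨?_, ?_, ?_⟩, h3 _ _ hr, ?_⟩
    · rw [card_filter_last (fun i => g i ≠ none), if_pos (by simp [hr])] at h1
      simp only [← Nat.succ_injective h1]
    · intro i j r' hi hj
      exact Fin.castSucc_injective n (h2 _ _ _ hi hj)
    · intro i r' hi
      exact h3 _ _ hi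
    · intro i hcon
      exact absurd (h2 _ _ _ hcon hr) (ne_of_lt (Fin.castSucc_lt_last i))
  refine Nat.card_eq_of_bijective
    (fun q => ⟨⟨fun i => q.1.1 i.castSucc,
        (q.1.1 (Fin.last n)).get (Option.isSome_iff_ne_none.2 q.2)⟩,
      hfwd q.1.1 q.1.2 _ (Option.some_get _).symm⟩) ⟨?_, ?_⟩
  · rintro q q' h
    have hfst : (fun i : Fin n => q.1.1 i.castSucc) = fun i : Fin n => q'.1.1 i.castSucc :=
      congrArg (fun z : {z : (Fin n → Option (Fin ρ)) × Fin ρ // _} => z.1.1) h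
    have hsnd := congrArg
      (fun z : {z : (Fin n → Option (Fin ρ)) × Fin ρ //
          BP (fun i => c i.castSucc) m z.1 ∧ ((z.2 : ℕ) : ℤ) < c (Fin.last n) ∧
            ∀ i, z.1 i ≠ some z.2} => z.1.2) h
    have hlast : q.1.1 (Fin.last n) = q'.1.1 (Fin.last n) := by
      rw [← Option.some_get (Option.isSome_iff_ne_none.2 q.2),
        ← Option.some_get (Option.isSome_iff_ne_none.2 q'.2)]
      exact congrArg some hsnd
    apply Subtype.ext; apply Subtype.ext; funext i
    induction i using Fin.lastCases with
    | last => exact hlast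
    | cast i => exact congrFun hfst i
  · rintro ⟨⟨g', r⟩, hbp', hrbd, hrun⟩
    have hBP : BP c (m + 1) (Fin.lastCases (some r) g') := by
      refine ⟨?_, ?_, ?_⟩
      · rw [card_filter_last (fun i => Fin.lastCases (some r) g' i ≠ none)]
        simp only [Fin.lastCases_castSucc, Fin.lastCases_last, ne_eq, reduceCtorEq,
          not_false_eq_true, if_true]
        rw [hbp'.1]
      · intro i j r' hi hj
        induction i using Fin.lastCases with
        | last =>
          simp only [Fin.lastCases_last] at hi
          induction j using Fin.lastCases with
          | last => rfl
          | cast j =>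
            simp only [Fin.lastCases_castSucc] at hj
            cases hi
            exact absurd hj (hrun j)
        | cast i =>
          simp only [Fin.lastCases_castSucc] at hi
          induction j using Fin.lastCases with
          | last =>
            simp only [Fin.lastCases_last] at hj
            cases hj
            exact absurd hi (hrun i)
          | cast j =>
            simp only [Fin.lastCases_castSucc] at hj
            exact congrArg Fin.castSucc (hbp'.2.1 _ _ _ hi hj)
      · intro i r' hi
        induction i using Fin.lastCases with
        | last =>
          simp only [Fin.lastCases_last, Option.some_inj] at hi
          rw [← hi]; exact hrbd
        | cast i =>
          simp only [Fin.lastCases_castSucc] at hi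
          exact hbp'.2.2 _ _ hi
    refine ⟨⟨⟨Fin.lastCases (some r) g', hBP⟩, by simp⟩, ?_⟩
    apply Subtype.ext
    refine Prod.ext ?_ ?_
    · funext i; simp [Fin.lastCases_castSucc]
    · apply Option.some_injective
      rw [Option.some_get]
      simp [Fin.lastCases_last]

lemma caseB_count (ρ n m : ℕ) (c : Fin (n + 1) → ℤ)
    (hmono : ∀ i j : Fin (n + 1), i ≤ j → c i ≤ c j) (hlast : c (Fin.last n) ≤ (ρ : ℤ)) :
    Nat.card {z : (Fin n → Option (Fin ρ)) × Fin ρ //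
        BP (fun i => c i.castSucc) m z.1 ∧ ((z.2 : ℕ) : ℤ) < c (Fin.last n) ∧
          ∀ i, z.1 i ≠ some z.2}
      = ((c (Fin.last n)).toNat - m) * Fcnt ρ n (fun i => c i.castSucc) m := by
  classical
  set c' : Fin n → ℤ := fun i => c i.castSucc with hc'
  set t := (c (Fin.last n)).toNat with htdef
  rw [Nat.card_congr (Equiv.subtypeProdEquivSigmaSubtype
      (fun (g' : Fin n → Option (Fin ρ)) (r : Fin ρ) =>
        BP c' m g' ∧ ((r : ℕ) : ℤ) < c (Fin.last n) ∧ ∀ i, g' i ≠ some r))]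
  rw [Nat.card_eq_fintype_card, Fintype.card_sigma]
  have fib : ∀ g' : Fin n → Option (Fin ρ),
      Fintype.card {r : Fin ρ // BP c' m g' ∧ ((r : ℕ) : ℤ) < c (Fin.last n) ∧
          ∀ i, g' i ≠ some r}
        = if BP c' m g' then t - m else 0 := by
    intro g'
    by_cases hbp : BP c' m g'
    · rw [if_pos hbp, Fintype.card_subtype]
      set S := filter (fun r : Fin ρ => ((r : ℕ) : ℤ) < c (Fin.last n)) univ with hS
      set used := filter (fun r : Fin ρ => ∃ i, g' i = some r) univ with hused
      have heq : filter (fun r : Fin ρ => BP c' m g' ∧ ((r : ℕ) : ℤ) < c (Fin.last n) ∧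
          ∀ i, g' i ≠ some r) univ = S \ used := by
        ext r
        simp only [hS, hused, Finset.mem_filter, Finset.mem_sdiff, Finset.mem_univ, true_and,
          hbp, true_and, not_exists]
      have hsub : used ⊆ S := by
        intro r hr
        rw [hused, Finset.mem_filter] at hr
        obtain ⟨i, hi⟩ := hr.2
        have hlt := hbp.2.2 i r hi
        rw [hS, Finset.mem_filter]
        exact ⟨Finset.mem_univ _, lt_of_lt_of_le hlt (hmono i.castSucc (Fin.last n) (Fin.le_last _))⟩
      have hScard : S.card = t := by
        have htρ : t ≤ ρ := by omega
        have hSm : S = (univ : Finset (Fin t)).map (Fin.castLEEmb htρ) := by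
          ext r
          simp only [hS, Finset.mem_filter, Finset.mem_univ, true_and, Finset.mem_map,
            Fin.castLEEmb_apply]
          constructor
          · intro hb
            have hrt : (r : ℕ) < t := by omega
            exact ⟨⟨(r : ℕ), hrt⟩, Fin.ext rfl⟩
          · rintro ⟨a, rfl⟩
            have := a.2
            have : ((Fin.castLE htρ a : Fin ρ) : ℕ) = (a : ℕ) := rfl
            omega
        rw [hSm, Finset.card_map, Finset.card_univ, Fintype.card_fin]
      have husedcard : used.card = m := by
        have hb : (filter (fun i => g' i ≠ none) univ).card = used.card := Finset.card_bij
          (fun (a : Fin n) (ha : a ∈ filter (fun i => g' i ≠ none) univ) =>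
            (g' a).get (Option.isSome_iff_ne_none.2 (Finset.mem_filter.1 ha).2))
          (fun a ha => by
            rw [hused, Finset.mem_filter]
            exact ⟨Finset.mem_univ _, a, (Option.some_get _).symm⟩)
          (fun a₁ ha₁ a₂ ha₂ hh => by
            apply hbp.2.1 a₁ a₂ ((g' a₁).get (Option.isSome_iff_ne_none.2
              (Finset.mem_filter.1 ha₁).2))
            · exact (Option.some_get _).symm
            · rw [hh]; exact (Option.some_get _).symm)
          (fun b hb => by
            rw [hused, Finset.mem_filter] at hb
            obtain ⟨i, hi⟩ := hb.2
            refine ⟨i, Finset.mem_filter.2 ⟨Finset.mem_univ _, by rw [hi]; simp⟩, ?_⟩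
            apply Option.some_injective
            rw [Option.some_get, hi])
        rw [← hb, hbp.1]
      rw [heq, Finset.card_sdiff_of_subset hsub, hScard, husedcard]
    · rw [if_neg hbp]
      exact Fintype.card_eq_zero_iff.2 ⟨fun r => hbp r.2.1⟩
  rw [Finset.sum_congr rfl (fun g' _ => fib g'), Finset.sum_ite, Finset.sum_const,
    Finset.sum_const_zero, add_zero, smul_eq_mul]
  have hF : Fcnt ρ n c' m = (filter (fun g' : Fin n → Option (Fin ρ) => BP c' m g') univ).card := by
    rw [Fcnt, Nat.card_eq_fintype_card, Fintype.card_subtype]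
  rw [hF]
  exact mul_comm _ _
lemma Fcnt_rec (ρ n m : ℕ) (c : Fin (n + 1) → ℤ)
    (hmono : ∀ i j : Fin (n + 1), i ≤ j → c i ≤ c j) (hlast : c (Fin.last n) ≤ (ρ : ℤ)) :
    Fcnt ρ (n + 1) c (m + 1)
      = Fcnt ρ n (fun i => c i.castSucc) (m + 1)
        + ((c (Fin.last n)).toNat - m) * Fcnt ρ n (fun i => c i.castSucc) m := by
  classical
  calc Fcnt ρ (n + 1) c (m + 1)
      = Nat.card ({q : {g : Fin (n + 1) → Option (Fin ρ) // BP c (m + 1) g} //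
            q.1 (Fin.last n) = none}
          ⊕ {q : {g : Fin (n + 1) → Option (Fin ρ) // BP c (m + 1) g} //
            ¬ q.1 (Fin.last n) = none}) :=
        (Nat.card_congr (Equiv.sumCompl _)).symm
    _ = _ := by
        rw [Nat.card_sum, caseA ρ n (m + 1) c, caseB ρ n m c, caseB_count ρ n m c hmono hlast]

lemma Fcnt_rec_int (ρ n m : ℕ) (c : Fin (n + 1) → ℤ)
    (hmono : ∀ i j : Fin (n + 1), i ≤ j → c i ≤ c j) (hlast : c (Fin.last n) ≤ (ρ : ℤ))
    (h0c : 0 ≤ c (Fin.last n)) :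
    (Fcnt ρ (n + 1) c (m + 1) : ℤ)
      = Fcnt ρ n (fun i => c i.castSucc) (m + 1)
        + (c (Fin.last n) - m) * Fcnt ρ n (fun i => c i.castSucc) m := by
  rw [Fcnt_rec ρ n m c hmono hlast]
  rcases Nat.eq_zero_or_pos (Fcnt ρ n (fun i => c i.castSucc) m) with h0 | hpos
  · rw [h0]; push_cast; ring
  · have hm : m ≤ (c (Fin.last n)).toNat := by
      by_contra hcon
      push_neg at hcon
      have hz := Fcnt_eq_zero_of_bound (ρ := ρ) (fun i => c i.castSucc) (c (Fin.last n)).toNat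
        (fun i => le_trans (hmono i.castSucc (Fin.last n) (Fin.le_last _)) (Int.self_le_toNat _))
        hcon
      omega
    have hle : (m : ℤ) ≤ c (Fin.last n) := by omega
    have hc : (((c (Fin.last n)).toNat - m : ℕ) : ℤ) = c (Fin.last n) - m := by omega
    push_cast [hc]
    ring

lemma genChoose_mul_factorial_s1 (x : ℝ) (k : ℕ) :
    genChoose x k * (k.factorial : ℝ) = ∏ j ∈ Finset.range k, (x - (j : ℝ)) :=
  div_mul_cancel₀ _ (by exact_mod_cast k.factorial_ne_zero)

lemma genChoose_succ_mul (x : ℝ) (k : ℕ) :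
    genChoose x (k + 1) * ((k + 1).factorial : ℝ)
      = genChoose x k * (k.factorial : ℝ) * (x - (k : ℝ)) := by
  rw [genChoose_mul_factorial_s1, genChoose_mul_factorial_s1, Finset.prod_range_succ]

lemma rB_eq_Fcnt (n : ℕ) (c : Fin n → ℤ) (m : ℕ) : rB n c m = Fcnt n n c m := by
  classical
  rw [rB, Fcnt]
  have key : ∀ q : {q : (s : Finset (Fin n)) × (↥s → Fin n) //
      q.1.card = m ∧ Function.Injective q.2 ∧ ∀ i, ((q.2 i : ℕ) : ℤ) < c i.1},
      BP (ρ := n) c m (fun i => if h : i ∈ q.1.1 then some (q.1.2 ⟨i, h⟩) else none) := by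
    rintro ⟨⟨s, f⟩, h1, h2, h3⟩
    refine ⟨?_, ?_, ?_⟩
    · dsimp only
      refine Eq.trans ?_ (show s.card = m from h1)
      congr 1
      ext i
      simp only [Finset.mem_filter, Finset.mem_univ, true_and]
      by_cases h : i ∈ s <;> simp [h]
    · intro i j r hi hj
      dsimp only at hi hj
      by_cases hii : i ∈ s
      · by_cases hjj : j ∈ s
        · rw [dif_pos hii] at hi
          rw [dif_pos hjj] at hj
          have : f ⟨i, hii⟩ = f ⟨j, hjj⟩ := by
            rw [Option.some_inj.1 hi, Option.some_inj.1 hj]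
          exact congrArg Subtype.val (h2 this)
        · rw [dif_neg hjj] at hj; cases hj
      · rw [dif_neg hii] at hi; cases hi
    · intro i r hi
      dsimp only at hi
      by_cases hii : i ∈ s
      · rw [dif_pos hii] at hi
        have := h3 ⟨i, hii⟩
        dsimp only at this
        rwa [Option.some_inj.1 hi] at this
      · rw [dif_neg hii] at hi; cases hi
  refine Nat.card_eq_of_bijective (fun q => ⟨_, key q⟩) ⟨?_, ?_⟩
  · rintro ⟨⟨s, f⟩, hq⟩ ⟨⟨s', f'⟩, hq'⟩ h
    have hv := congrArg Subtype.val h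
    dsimp only at hv
    have hs : s = s' := by
      ext i
      constructor
      · intro hm1
        by_contra hm2
        have := congrFun hv i
        rw [dif_pos hm1, dif_neg hm2] at this
        cases this
      · intro hm2
        by_contra hm1
        have := congrFun hv i
        rw [dif_neg hm1, dif_pos hm2] at this
        cases this
    subst hs
    have hf : f = f' := by
      funext i
      have := congrFun hv i.1
      rw [dif_pos i.2, dif_pos i.2] at this
      exact Option.some_injective _ this
    subst hf
    rfl
  · rintro ⟨g, h1, h2, h3⟩
    refine ⟨⟨⟨Finset.filter (fun i => g i ≠ none) Finset.univ,
      fun i => (g i.1).get (Option.isSome_iff_ne_none.2 (Finset.mem_filter.1 i.2).2)⟩,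
      h1, ?_, ?_⟩, ?_⟩
    · intro a b hab
      dsimp only at hab
      apply Subtype.ext
      apply h2 a.1 b.1 ((g a.1).get (Option.isSome_iff_ne_none.2 (Finset.mem_filter.1 a.2).2))
      · exact (Option.some_get _).symm
      · rw [hab]; exact (Option.some_get _).symm
    · intro i
      exact h3 i.1 _ (Option.some_get _).symm
    · apply Subtype.ext
      funext i
      dsimp only
      by_cases h : i ∈ Finset.filter (fun i => g i ≠ none) Finset.univ
      · rw [dif_pos h, Option.some_get]
      · rw [dif_neg h]
        have : ¬ g i ≠ none := fun hcon => h (Finset.mem_filter.2 ⟨Finset.mem_univ _, hcon⟩)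
        rw [not_not] at this
        exact this.symm

lemma gjw_main : ∀ (n ρ : ℕ) (c : Fin n → ℤ), (∀ i, 0 ≤ c i) →
    (∀ i j : Fin n, i ≤ j → c i ≤ c j) → (∀ i, c i ≤ (ρ : ℤ)) → ∀ x : ℝ,
    ∏ i : Fin n, (x + (c i : ℝ) - ((i : ℕ) : ℝ)) =
      ∑ k ∈ Finset.range (n + 1),
        (Fcnt ρ n c (n - k) : ℝ) * genChoose x k * (k.factorial : ℝ) := by
  intro n
  induction n with
  | zero =>
    intro ρ c _ _ _ x
    simp [Fcnt_zero, genChoose]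
  | succ n ih =>
    intro ρ c h0 hmono hbound x
    have hmono' : ∀ i j : Fin n, i ≤ j →
        (fun i : Fin n => c i.castSucc) i ≤ (fun i : Fin n => c i.castSucc) j := by
      intro i j h
      exact hmono _ _ (by simpa using h)
    have IH := ih ρ (fun i => c i.castSucc) (fun i => h0 _) hmono' (fun i => hbound _) x
    have key : ∑ k ∈ Finset.range (n + 1 + 1),
        (Fcnt ρ (n + 1) c (n + 1 - k) : ℝ) * genChoose x k * (k.factorial : ℝ)
        = (x + (c (Fin.last n) : ℝ) - (n : ℝ)) * ∑ k ∈ Finset.range (n + 1),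
            (Fcnt ρ n (fun i => c i.castSucc) (n - k) : ℝ) * genChoose x k
              * (k.factorial : ℝ) := by
      have hsplit : ∀ k ∈ Finset.range (n + 1),
          (Fcnt ρ (n + 1) c (n + 1 - k) : ℝ) * genChoose x k * (k.factorial : ℝ)
            = (Fcnt ρ n (fun i => c i.castSucc) (n - k + 1) : ℝ) * genChoose x k
                * (k.factorial : ℝ)
              + ((c (Fin.last n) : ℝ) - ((n - k : ℕ) : ℝ))
                * ((Fcnt ρ n (fun i => c i.castSucc) (n - k) : ℝ)
                  * genChoose x k * (k.factorial : ℝ)) := by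
        intro k hk
        rw [Finset.mem_range] at hk
        have hm : n + 1 - k = (n - k) + 1 := by omega
        have hrec := Fcnt_rec_int ρ n (n - k) c hmono (hbound _) (h0 _)
        have hcast : (Fcnt ρ (n + 1) c ((n - k) + 1) : ℝ)
            = (Fcnt ρ n (fun i => c i.castSucc) ((n - k) + 1) : ℝ)
              + ((c (Fin.last n) : ℝ) - ((n - k : ℕ) : ℝ))
                * (Fcnt ρ n (fun i => c i.castSucc) (n - k) : ℝ) := by
          exact_mod_cast hrec
        rw [hm, hcast]
        ring
      rw [Finset.sum_range_succ, Finset.sum_congr rfl hsplit, Finset.sum_add_distrib]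
      have hz : n + 1 - (n + 1) = 0 := by omega
      rw [hz, Fcnt_zero]
      have hfirst : ∑ k ∈ Finset.range (n + 1),
          (Fcnt ρ n (fun i => c i.castSucc) (n - k + 1) : ℝ) * genChoose x k
            * (k.factorial : ℝ)
          = ∑ i ∈ Finset.range n,
              (Fcnt ρ n (fun i => c i.castSucc) (n - i) : ℝ)
                * (genChoose x i * (i.factorial : ℝ) * (x - (i : ℝ))) := by
        rw [Finset.sum_range_succ']
        have h00 : (Fcnt ρ n (fun i => c i.castSucc) (n - 0 + 1) : ℝ) * genChoose x 0
            * (Nat.factorial 0 : ℝ) = 0 := by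
          rw [Nat.sub_zero, Fcnt_eq_zero_of_lt _ (Nat.lt_succ_self n)]
          simp
        rw [h00, add_zero]
        refine Finset.sum_congr rfl ?_
        intro i hi
        rw [Finset.mem_range] at hi
        have hmi : n - (i + 1) + 1 = n - i := by omega
        rw [hmi]
        rw [mul_assoc, genChoose_succ_mul, mul_assoc]
      rw [hfirst]
      have hlaststep : ((1 : ℕ) : ℝ) * genChoose x (n + 1) * ((n + 1).factorial : ℝ)
          = (Fcnt ρ n (fun i => c i.castSucc) (n - n) : ℝ)
            * (genChoose x n * (n.factorial : ℝ) * (x - (n : ℝ))) := by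
        rw [Nat.sub_self, Fcnt_zero, Nat.cast_one, one_mul, one_mul]
        exact genChoose_succ_mul x n
      rw [hlaststep, add_right_comm, ← Finset.sum_range_succ
        (fun i => (Fcnt ρ n (fun i => c i.castSucc) (n - i) : ℝ)
          * (genChoose x i * (i.factorial : ℝ) * (x - (i : ℝ)))) n]
      rw [Finset.mul_sum, ← Finset.sum_add_distrib]
      refine Finset.sum_congr rfl ?_
      intro k hk
      rw [Finset.mem_range] at hk
      have hnk : ((n - k : ℕ) : ℝ) = (n : ℝ) - (k : ℝ) := by
        have : (k : ℝ) ≤ (n : ℝ) := by exact_mod_cast Nat.le_of_lt_succ hk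
        rw [Nat.cast_sub (Nat.le_of_lt_succ hk)]
      rw [hnk]
      ring
    rw [Fin.prod_univ_castSucc]
    simp only [Fin.coe_castSucc, Fin.val_last]
    rw [key, ← IH]
    ring

/-- Goldman–Joichi–White, rook polynomial form. For integers
`0 ≤ c 1 ≤ ⋯ ≤ c n ≤ n` and every real `x`,
`∏_{i=1}^n (x + c_i − i + 1) = Σ_{k=0}^n r_{n−k}(B) · C(x, k) · k!`. -/
theorem statement1 (n : ℕ) (hn : 1 ≤ n) (c : Fin n → ℤ)
    (hc0 : ∀ i, 0 ≤ c i) (hmono : ∀ i j : Fin n, i ≤ j → c i ≤ c j)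
    (hcn : ∀ i, c i ≤ (n : ℤ)) (x : ℝ) :
    ∏ i : Fin n, (x + (c i : ℝ) - ((i : ℕ) : ℝ)) =
      ∑ k ∈ Finset.range (n + 1),
        (rB n c (n - k) : ℝ) * genChoose x k * (k.factorial : ℝ) := by
  simpa only [rB_eq_Fcnt] using gjw_main n n c hc0 hmono hcn x
end

section
/- Let λ be a partition of n. Then the number of quasi-Yamanouchi tableaux of shape λ with maximum entry at most n equals the number of standard Young tableaux of shape λ. -/
/-- Cell membership: `(i, j)` (row `i` counted from the bottom, column `j`, both
0-indexed) is a cell of the Young diagram of the partition `p` (French notation). -/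
def cellMem {n : ℕ} (p : Nat.Partition n) (i j : ℕ) : Prop :=
  i < (p.parts.filter (fun a => j < a)).card

instance {n : ℕ} (p : Nat.Partition n) (i j : ℕ) : Decidable (cellMem p i j) := by
  unfold cellMem; infer_instance

/-- Semistandard Young tableaux of shape `p` (French convention): a filling of the
diagram of `p` by positive integers, weakly increasing left to right along rows and
strictly increasing up columns (row index increases going up). -/
structure SSYT {n : ℕ} (p : Nat.Partition n) where
  entry : ℕ → ℕ → ℕ
  pos : ∀ i j, cellMem p i j → 1 ≤ entry i j
  zeros : ∀ i j, ¬ cellMem p i j → entry i j = 0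
  rowWeak : ∀ i j1 j2, j1 < j2 → cellMem p i j2 → entry i j1 ≤ entry i j2
  colStrict : ∀ i1 i2 j, i1 < i2 → cellMem p i2 j → entry i1 j < entry i2 j
/-- Quasi-Yamanouchi: for every value `v ≥ 2` appearing in `T`, the leftmost occurrence
of `v` lies in a column weakly to the left of some occurrence of `v - 1` in a strictly
lower row. -/
def IsQY {n : ℕ} (p : Nat.Partition n) (T : SSYT p) : Prop :=
  ∀ v i j, 2 ≤ v → cellMem p i j → T.entry i j = v →
    (∀ i' j', cellMem p i' j' → T.entry i' j' = v → j ≤ j') →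
    ∃ i' j', cellMem p i' j' ∧ T.entry i' j' = v - 1 ∧ i' < i ∧ j ≤ j'
/-- A standard Young tableau: each of the values `1, …, n` appears in exactly one cell. -/
def IsSYT {n : ℕ} (p : Nat.Partition n) (T : SSYT p) : Prop :=
  ∀ v, 1 ≤ v → v ≤ n → ∃! c : ℕ × ℕ, cellMem p c.1 c.2 ∧ T.entry c.1 c.2 = v
/-- `|SYT(p)|`: the number of standard Young tableaux of shape `p`. -/
noncomputable def SYTcount {n : ℕ} (p : Nat.Partition n) : ℕ :=
  Nat.card {T : SSYT p // IsSYT p T}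

namespace St2
open Finset

variable {n : ℕ} (p : Nat.Partition n)

lemma parts_le (a : ℕ) (ha : a ∈ p.parts) : a ≤ n := by
  have := p.parts_sum
  calc a ≤ p.parts.sum := Multiset.le_sum_of_mem ha
  _ = n := this

lemma card_parts_le : Multiset.card p.parts ≤ n := by
  have h1 : ∀ x ∈ p.parts, 1 ≤ x := fun x hx => p.parts_pos hx
  calc Multiset.card p.parts = (p.parts.map (fun _ => 1)).sum := by simp
  _ ≤ (p.parts.map (fun a => a)).sum :=
      Multiset.sum_map_le_sum_map _ _ (by simpa using h1)
  _ = p.parts.sum := by simp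
  _ = n := p.parts_sum

lemma cellMem_row_lt {i j : ℕ} (h : cellMem p i j) : i < n :=
  lt_of_lt_of_le h (le_trans (Multiset.card_le_card (Multiset.filter_le _ _)) (card_parts_le p))

lemma cellMem_col_lt {i j : ℕ} (h : cellMem p i j) : j < n := by
  have : (p.parts.filter (fun a => j < a)) ≠ 0 := by
    intro h0
    rw [cellMem, h0] at h; simp at h
  obtain ⟨a, ha⟩ := Multiset.exists_mem_of_ne_zero this
  have := Multiset.mem_filter.mp ha
  exact lt_of_lt_of_le this.2 (parts_le p a this.1)

lemma cellMem_mono_row {i1 i2 j : ℕ} (h : cellMem p i2 j) (hle : i1 ≤ i2) : cellMem p i1 j :=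
  lt_of_le_of_lt hle h

lemma cellMem_mono_col {i j1 j2 : ℕ} (h : cellMem p i j2) (hle : j1 ≤ j2) : cellMem p i j1 := by
  refine lt_of_lt_of_le h (Multiset.card_le_card (Multiset.monotone_filter_right _ ?_))
  intro a ha
  omega

/-- The cells of the diagram as a Finset. -/
def cells : Finset (ℕ × ℕ) :=
  (Finset.range n ×ˢ Finset.range n).filter fun c => cellMem p c.1 c.2

lemma mem_cells {c : ℕ × ℕ} : c ∈ cells p ↔ cellMem p c.1 c.2 := by
  simp only [cells, mem_filter, mem_product, mem_range]
  exact ⟨fun h => h.2, fun h => ⟨⟨cellMem_row_lt p h, cellMem_col_lt p h⟩, h⟩⟩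

lemma sum_filter_card (s : Multiset ℕ) (hs : ∀ a ∈ s, a ≤ n) :
    ∑ j ∈ range n, Multiset.card (s.filter (fun a => j < a)) = s.sum := by
  induction s using Multiset.induction with
  | empty => simp
  | cons a s ih =>
    have ha : a ≤ n := hs a (Multiset.mem_cons_self _ _)
    have ihs := ih (fun x hx => hs x (Multiset.mem_cons_of_mem hx))
    simp only [Multiset.filter_cons, Multiset.card_add, Multiset.sum_cons]
    rw [Finset.sum_add_distrib, ihs]
    congr 1
    have : ∀ j ∈ range n, Multiset.card (if j < a then ({a} : Multiset ℕ) else 0) = if j < a then 1 else 0 := by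
      intro j _; split <;> simp
    rw [Finset.sum_congr rfl this, ← Finset.card_filter]
    have : (Finset.range n).filter (fun j => j < a) = Finset.range a := by
      ext x; simp [Finset.mem_range]; omega
    rw [this, Finset.card_range]

lemma card_cells : (cells p).card = n := by
  have h1 : (cells p).card = ∑ j ∈ range n, ((cells p).filter (fun c => c.2 = j)).card :=
    Finset.card_eq_sum_card_fiberwise (fun c hc => mem_range.mpr (cellMem_col_lt p ((mem_cells p).mp hc)))
  rw [h1]
  have h2 : ∀ j ∈ range n, ((cells p).filter (fun c => c.2 = j)).card
      = Multiset.card (p.parts.filter (fun a => j < a)) := by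
    intro j hj
    have hle : Multiset.card (p.parts.filter (fun a => j < a)) ≤ n :=
      le_trans (Multiset.card_le_card (Multiset.filter_le _ _)) (card_parts_le p)
    have heq : (cells p).filter (fun c => c.2 = j)
        = (range (Multiset.card (p.parts.filter (fun a => j < a)))).image (fun i => (i, j)) := by
      ext c
      simp only [mem_filter, mem_cells, mem_image, mem_range, cellMem]
      constructor
      · rintro ⟨h, rfl⟩; exact ⟨c.1, h, rfl⟩
      · rintro ⟨i, hi, rfl⟩; exact ⟨hi, rfl⟩
    rw [heq, Finset.card_image_of_injective _ (fun a b hab => by simpa using hab), Finset.card_range]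
  rw [Finset.sum_congr rfl h2, sum_filter_card p.parts (parts_le p)]
  exact p.parts_sum

set_option linter.unusedSectionVars false
section Rank
open Finset
variable {α β : Type*} [LinearOrder α] [DecidableEq β]

lemma card_filter_lt_mono (s : Finset β) (f : β → α) {a b : β} (ha : a ∈ s) (h : f a < f b) :
    (s.filter fun d => f d < f a).card < (s.filter fun d => f d < f b).card := by
  apply Finset.card_lt_card
  constructor
  · intro d hd
    simp only [Finset.mem_filter] at *
    exact ⟨hd.1, hd.2.trans h⟩
  · intro hsub
    have : a ∈ s.filter fun d => f d < f a := hsub (Finset.mem_filter.mpr ⟨ha, h⟩)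
    simp at this

lemma card_filter_lt_le (s : Finset β) (f : β → α) {a b : β} (h : f a ≤ f b) :
    (s.filter fun d => f d < f a).card ≤ (s.filter fun d => f d < f b).card := by
  apply Finset.card_le_card
  intro d hd
  simp only [Finset.mem_filter] at *
  exact ⟨hd.1, lt_of_lt_of_le hd.2 h⟩

lemma rank_existsUnique (s : Finset β) (f : β → α)
    (hf : ∀ a ∈ s, ∀ b ∈ s, f a = f b → a = b) {m : ℕ} (hm : m < s.card) :
    ∃! b, b ∈ s ∧ (s.filter fun d => f d < f b).card = m := by
  have hrange : ∀ b ∈ s, (s.filter fun d => f d < f b).card < s.card := by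
    intro b hb
    have : (s.filter fun d => f d < f b) ⊆ s.erase b := by
      intro d hd
      simp only [Finset.mem_filter] at hd
      exact Finset.mem_erase.mpr ⟨fun he => absurd (he ▸ hd.2) (lt_irrefl _), hd.1⟩
    calc (s.filter fun d => f d < f b).card ≤ (s.erase b).card := Finset.card_le_card this
    _ < s.card := Finset.card_erase_lt_of_mem hb
  have hinj : ∀ a ∈ s, ∀ b ∈ s,
      (s.filter fun d => f d < f a).card = (s.filter fun d => f d < f b).card → a = b := by
    intro a ha b hb hab
    rcases lt_trichotomy (f a) (f b) with h | h | h
    · exact absurd hab (Nat.ne_of_lt (card_filter_lt_mono s f ha h))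
    · exact hf a ha b hb h
    · exact absurd hab.symm (Nat.ne_of_lt (card_filter_lt_mono s f hb h))
  obtain ⟨b, hbs, hbm⟩ := Finset.surj_on_of_inj_on_of_card_le
    (fun b (_ : b ∈ s) => (s.filter fun d => f d < f b).card)
    (fun b hb => Finset.mem_range.mpr (hrange b hb))
    (fun a b ha hb h => hinj a ha b hb h)
    (by rw [Finset.card_range]) m (Finset.mem_range.mpr hm)
  exact ⟨b, ⟨hbs, hbm.symm⟩, fun c hc => hinj c hc.1 b hbs (hc.2.trans hbm)⟩

end Rank

section Key
open Finset
variable {n : ℕ} (p : Nat.Partition n)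

/-- structure extensionality for SSYT -/
lemma SSYT.ext' {T U : SSYT p} (h : T.entry = U.entry) : T = U := by
  cases T; cases U; simp_all

/-- key for standardization: lex on (value, column) -/
def key (T : SSYT p) (c : ℕ × ℕ) : ℕ ×ₗ ℕ := toLex (T.entry c.1 c.2, c.2)

lemma key_lt_iff (T : SSYT p) (c d : ℕ × ℕ) :
    key p T c < key p T d ↔
      T.entry c.1 c.2 < T.entry d.1 d.2 ∨ (T.entry c.1 c.2 = T.entry d.1 d.2 ∧ c.2 < d.2) :=
  Prod.Lex.lt_iff

lemma key_injOn (T : SSYT p) : ∀ a ∈ cells p, ∀ b ∈ cells p, key p T a = key p T b → a = b := by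
  intro a ha b hb hab
  have h1 : T.entry a.1 a.2 = T.entry b.1 b.2 ∧ a.2 = b.2 := by
    have := congrArg (fun x => (ofLex x).1) hab
    have h2 := congrArg (fun x => (ofLex x).2) hab
    exact ⟨this, h2⟩
  have hcol : a.2 = b.2 := h1.2
  have hval := h1.1
  rw [hcol] at hval
  have hrow : a.1 = b.1 := by
    by_contra hne
    rcases Nat.lt_or_ge a.1 b.1 with h | h
    · have := T.colStrict a.1 b.1 b.2 h ((mem_cells p).mp hb)
      omega
    · have h' : b.1 < a.1 := by omega
      have := T.colStrict b.1 a.1 b.2 h' (by rw [← hcol]; exact (mem_cells p).mp ha)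
      omega
  exact Prod.ext hrow hcol

/-- rank of a cell in the standardization order -/
noncomputable def rank (T : SSYT p) (c : ℕ × ℕ) : ℕ :=
  ((cells p).filter fun d => key p T d < key p T c).card

noncomputable def stdE (T : SSYT p) (i j : ℕ) : ℕ :=
  if cellMem p i j then rank p T (i, j) + 1 else 0

lemma key_lt_of_entry_lt (T : SSYT p) {c d : ℕ × ℕ} (h : T.entry c.1 c.2 < T.entry d.1 d.2) :
    key p T c < key p T d := (key_lt_iff p T c d).mpr (Or.inl h)

lemma rank_lt_rank (T : SSYT p) {c d : ℕ × ℕ} (hc : c ∈ cells p)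
    (h : key p T c < key p T d) : rank p T c < rank p T d :=
  card_filter_lt_mono (cells p) (key p T) hc h

lemma rank_le_rank (T : SSYT p) {c d : ℕ × ℕ} (h : key p T c ≤ key p T d) :
    rank p T c ≤ rank p T d :=
  card_filter_lt_le (cells p) (key p T) h

lemma key_lt_of_rank_lt (T : SSYT p) {c d : ℕ × ℕ} (h : rank p T c < rank p T d) :
    key p T c < key p T d := by
  by_contra hle
  exact absurd (rank_le_rank p T (le_of_not_gt hle)) (by omega)

/-- the standardization of an SSYT -/
noncomputable def std (T : SSYT p) : SSYT p where
  entry := stdE p T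
  pos := fun i j h => by simp [stdE, h]
  zeros := fun i j h => by simp [stdE, h]
  rowWeak := by
    intro i j1 j2 hj h2
    have h1 : cellMem p i j1 := cellMem_mono_col p h2 (le_of_lt hj)
    have hkey : key p T (i, j1) < key p T (i, j2) := by
      rw [key_lt_iff]
      rcases lt_or_eq_of_le (T.rowWeak i j1 j2 hj h2) with h | h
      · exact Or.inl h
      · exact Or.inr ⟨h, hj⟩
    have := rank_lt_rank p T ((mem_cells p).mpr h1) hkey
    simp only [stdE, if_pos h1, if_pos h2]
    omega
  colStrict := by
    intro i1 i2 j hi h2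
    have h1 : cellMem p i1 j := cellMem_mono_row p h2 (le_of_lt hi)
    have hkey : key p T (i1, j) < key p T (i2, j) :=
      key_lt_of_entry_lt p T (T.colStrict i1 i2 j hi h2)
    have := rank_lt_rank p T ((mem_cells p).mpr h1) hkey
    simp only [stdE, if_pos h1, if_pos h2]
    omega

lemma std_entry (T : SSYT p) (i j : ℕ) : (std p T).entry i j = stdE p T i j := rfl

lemma std_isSYT (T : SSYT p) : IsSYT p (std p T) := by
  intro v hv1 hvn
  have hm : v - 1 < (cells p).card := by rw [card_cells]; omega
  obtain ⟨b, ⟨hbs, hbr⟩, hbu⟩ := rank_existsUnique (cells p) (key p T) (key_injOn p T) hm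
  refine ⟨b, ⟨(mem_cells p).mp hbs, ?_⟩, ?_⟩
  · show stdE p T b.1 b.2 = v
    rw [stdE, if_pos ((mem_cells p).mp hbs)]
    have : rank p T (b.1, b.2) = v - 1 := hbr
    omega
  · rintro c ⟨hc, hce⟩
    apply hbu
    refine ⟨(mem_cells p).mpr hc, ?_⟩
    have : stdE p T c.1 c.2 = v := hce
    rw [stdE, if_pos hc] at this
    show rank p T c = v - 1
    have : rank p T (c.1, c.2) = v - 1 := by omega
    simpa using this

end Key

section Destd
open Finset
variable {n : ℕ} (p : Nat.Partition n) (S : SSYT p) (hS : IsSYT p S)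

noncomputable def cellOf (v : ℕ) : ℕ × ℕ :=
  if h : 1 ≤ v ∧ v ≤ n then (hS v h.1 h.2).choose else (0, 0)

lemma cellOf_spec {v : ℕ} (h1 : 1 ≤ v) (h2 : v ≤ n) :
    cellMem p (cellOf p S hS v).1 (cellOf p S hS v).2 ∧
      S.entry (cellOf p S hS v).1 (cellOf p S hS v).2 = v := by
  rw [cellOf, dif_pos (⟨h1, h2⟩ : 1 ≤ v ∧ v ≤ n)]
  exact (hS v h1 h2).choose_spec.1

lemma cellOf_unique {v : ℕ} (h1 : 1 ≤ v) (h2 : v ≤ n) {c : ℕ × ℕ}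
    (hc : cellMem p c.1 c.2) (he : S.entry c.1 c.2 = v) : c = cellOf p S hS v := by
  rw [cellOf, dif_pos (⟨h1, h2⟩ : 1 ≤ v ∧ v ≤ n)]
  exact (hS v h1 h2).choose_spec.2 c ⟨hc, he⟩

lemma cellOf_mem {v : ℕ} (h1 : 1 ≤ v) (h2 : v ≤ n) : cellOf p S hS v ∈ cells p :=
  (mem_cells p).mpr (cellOf_spec p S hS h1 h2).1

lemma entry_mem {c : ℕ × ℕ} (hc : c ∈ cells p) :
    1 ≤ S.entry c.1 c.2 ∧ S.entry c.1 c.2 ≤ n ∧ cellOf p S hS (S.entry c.1 c.2) = c := by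
  have hsurj := Finset.surj_on_of_inj_on_of_card_le
    (s := Finset.Icc 1 n) (t := cells p)
    (fun v (_ : v ∈ Finset.Icc 1 n) => cellOf p S hS v)
    (fun v hv => by
      rw [Finset.mem_Icc] at hv
      exact cellOf_mem p S hS hv.1 hv.2)
    (fun v w hv hw hvw => by
      rw [Finset.mem_Icc] at hv hw
      have e1 := (cellOf_spec p S hS hv.1 hv.2).2
      have e2 := (cellOf_spec p S hS hw.1 hw.2).2
      have hvw' : cellOf p S hS v = cellOf p S hS w := hvw
      rw [← hvw'] at e2
      omega)
    (by rw [card_cells, Nat.card_Icc]; omega)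
  obtain ⟨v, hv, hcv⟩ := hsurj c hc
  rw [Finset.mem_Icc] at hv
  have hsp := (cellOf_spec p S hS hv.1 hv.2).2
  have hcv' : c = cellOf p S hS v := hcv
  rw [← hcv'] at hsp
  rw [hsp]
  exact ⟨hv.1, hv.2, hcv'.symm⟩

/-- `k` is a descent: `k+1` lies in a strictly higher row than `k`. -/
def desc (k : ℕ) : Prop := (cellOf p S hS k).1 < (cellOf p S hS (k + 1)).1

noncomputable instance (k : ℕ) : Decidable (desc p S hS k) := by unfold desc; infer_instance

noncomputable def dcount (v : ℕ) : ℕ :=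
  1 + ((Finset.Ico 1 v).filter (fun k => desc p S hS k)).card

lemma dcount_pos (v : ℕ) : 1 ≤ dcount p S hS v := by simp [dcount]

lemma dcount_le {v : ℕ} (h : 1 ≤ v) : dcount p S hS v ≤ v := by
  have := Finset.card_filter_le (Finset.Ico 1 v) (fun k => desc p S hS k)
  rw [Nat.card_Ico] at this
  rw [dcount]; omega

lemma dcount_add {u v : ℕ} (h1 : 1 ≤ u) (h2 : u ≤ v) :
    dcount p S hS v = dcount p S hS u + ((Finset.Ico u v).filter (fun k => desc p S hS k)).card := by
  have hsplit : Finset.Ico 1 v = Finset.Ico 1 u ∪ Finset.Ico u v :=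
    (Finset.Ico_union_Ico_eq_Ico h1 h2).symm
  have hdisj : Disjoint (Finset.Ico 1 u) (Finset.Ico u v) := by
    rw [Finset.disjoint_left]
    intro a ha hb
    rw [Finset.mem_Ico] at ha hb
    omega
  rw [dcount, dcount, hsplit, Finset.filter_union,
    Finset.card_union_of_disjoint (Finset.disjoint_filter_filter hdisj)]
  ring

lemma dcount_mono {u v : ℕ} (h1 : 1 ≤ u) (h2 : u ≤ v) :
    dcount p S hS u ≤ dcount p S hS v := by
  rw [dcount_add p S hS h1 h2]; omega

lemma dcount_succ {v : ℕ} (h : 1 ≤ v) :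
    dcount p S hS (v + 1) = dcount p S hS v + if desc p S hS v then 1 else 0 := by
  rw [dcount_add p S hS h (Nat.le_succ v)]
  congr 1
  have : Finset.Ico v (v + 1) = {v} := by rw [Finset.Ico_add_one_right_eq_Icc, Finset.Icc_self]
  rw [this, Finset.filter_singleton]
  split <;> simp

lemma dcount_one : dcount p S hS 1 = 1 := by simp [dcount]

/-- If `k` is not a descent, the column strictly increases from `k` to `k+1`. -/
lemma col_lt_of_not_desc {k : ℕ} (h1 : 1 ≤ k) (h2 : k + 1 ≤ n) (hnd : ¬ desc p S hS k) :
    (cellOf p S hS k).2 < (cellOf p S hS (k + 1)).2 := by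
  obtain ⟨hc1, he1⟩ := cellOf_spec p S hS h1 (by omega)
  obtain ⟨hc2, he2⟩ := cellOf_spec p S hS (v := k + 1) (by omega) h2
  set c := cellOf p S hS k
  set d := cellOf p S hS (k + 1)
  have hnd' : d.1 ≤ c.1 := not_lt.mp hnd
  by_contra hcol
  rw [not_lt] at hcol
  rcases Nat.lt_or_ge d.2 c.2 with h | h
  · -- d strictly left of c
    have hm : cellMem p d.1 c.2 := cellMem_mono_row p hc1 hnd'
    have hw : S.entry d.1 d.2 ≤ S.entry d.1 c.2 := S.rowWeak d.1 d.2 c.2 h hm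
    rcases Nat.lt_or_ge d.1 c.1 with hr | hr
    · have := S.colStrict d.1 c.1 c.2 hr hc1
      omega
    · have hr' : d.1 = c.1 := by omega
      rw [hr'] at hw he2
      omega
  · -- same column
    have hcol' : c.2 = d.2 := by omega
    rcases Nat.lt_or_ge d.1 c.1 with hr | hr
    · have := S.colStrict d.1 c.1 c.2 hr hc1
      rw [hcol'] at this he1
      omega
    · have hr' : d.1 = c.1 := by omega
      have : c = d := Prod.ext hr'.symm hcol'
      rw [this] at he1
      omega

/-- If `k` is a descent, the column weakly decreases from `k` to `k+1`. -/
lemma col_le_of_desc {k : ℕ} (h1 : 1 ≤ k) (h2 : k + 1 ≤ n) (hd : desc p S hS k) :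
    (cellOf p S hS (k + 1)).2 ≤ (cellOf p S hS k).2 := by
  obtain ⟨hc1, he1⟩ := cellOf_spec p S hS h1 (by omega)
  obtain ⟨hc2, he2⟩ := cellOf_spec p S hS (v := k + 1) (by omega) h2
  set c := cellOf p S hS k
  set d := cellOf p S hS (k + 1)
  have hd' : c.1 < d.1 := hd
  by_contra hcol
  rw [not_le] at hcol
  have hm : cellMem p c.1 d.2 := cellMem_mono_row p hc2 (le_of_lt hd')
  have hw : S.entry c.1 c.2 ≤ S.entry c.1 d.2 := S.rowWeak c.1 c.2 d.2 hcol hm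
  have hs : S.entry c.1 d.2 < S.entry d.1 d.2 := S.colStrict c.1 d.1 d.2 hd' hc2
  have he : S.entry c.1 d.2 = k := by omega
  have heq : (c.1, d.2) = c := cellOf_unique p S hS h1 (by omega) (c := (c.1, d.2)) hm he
  have : d.2 = c.2 := by
    have h22 := congrArg Prod.snd heq
    simpa using h22
  omega

/-- If there is no descent between `u` and `v`, rows weakly decrease and
columns strictly increase. -/
lemma chain_of_no_desc {u v : ℕ} (h1 : 1 ≤ u) (hv : v ≤ n) (huv : u ≤ v)
    (h : ∀ k ∈ Finset.Ico u v, ¬ desc p S hS k) :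
    (cellOf p S hS v).1 ≤ (cellOf p S hS u).1 ∧
      (u = v ∨ (cellOf p S hS u).2 < (cellOf p S hS v).2) := by
  induction v, huv using Nat.le_induction with
  | base => exact ⟨le_refl _, Or.inl rfl⟩
  | succ v hv' ih =>
    have hvn : v ≤ n := by omega
    have hsub : ∀ k ∈ Finset.Ico u v, ¬ desc p S hS k := by
      intro k hk
      rw [Finset.mem_Ico] at hk
      exact h k (Finset.mem_Ico.mpr ⟨hk.1, by omega⟩)
    obtain ⟨ihr, ihc⟩ := ih hvn hsub
    have hvd : ¬ desc p S hS v := h v (Finset.mem_Ico.mpr ⟨by omega, by omega⟩)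
    have hrow : (cellOf p S hS (v + 1)).1 ≤ (cellOf p S hS v).1 := by
      rw [desc, not_lt] at hvd; exact hvd
    have hcol : (cellOf p S hS v).2 < (cellOf p S hS (v + 1)).2 :=
      col_lt_of_not_desc p S hS (by omega) (by omega) hvd
    refine ⟨le_trans hrow ihr, Or.inr ?_⟩
    rcases ihc with h' | h'
    · rw [h']; exact hcol
    · omega

end Destd

section DestdTab
open Finset
variable {n : ℕ} (p : Nat.Partition n) (S : SSYT p) (hS : IsSYT p S)

lemma no_desc_of_dcount_eq {u v : ℕ} (h1 : 1 ≤ u) (h2 : u ≤ v)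
    (h : dcount p S hS u = dcount p S hS v) :
    ∀ k ∈ Finset.Ico u v, ¬ desc p S hS k := by
  have := dcount_add p S hS h1 h2
  rw [← h] at this
  have hcard : ((Finset.Ico u v).filter (fun k => desc p S hS k)).card = 0 := by omega
  intro k hk hd
  have : k ∈ (Finset.Ico u v).filter (fun k => desc p S hS k) :=
    Finset.mem_filter.mpr ⟨hk, hd⟩
  rw [Finset.card_eq_zero] at hcard
  rw [hcard] at this
  exact absurd this (Finset.notMem_empty k)

noncomputable def destdE (i j : ℕ) : ℕ :=
  if cellMem p i j then dcount p S hS (S.entry i j) else 0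

noncomputable def destd : SSYT p where
  entry := destdE p S hS
  pos := fun i j h => by
    rw [destdE, if_pos h]; exact dcount_pos p S hS _
  zeros := fun i j h => by rw [destdE, if_neg h]
  rowWeak := by
    intro i j1 j2 hj h2
    by_cases h1 : cellMem p i j1
    · rw [destdE, if_pos h1, destdE, if_pos h2]
      exact dcount_mono p S hS (S.pos i j1 h1) (S.rowWeak i j1 j2 hj h2)
    · rw [destdE, if_neg h1]; omega
  colStrict := by
    intro i1 i2 j hi h2
    have h1 : cellMem p i1 j := cellMem_mono_row p h2 (le_of_lt hi)
    rw [destdE, if_pos h1, destdE, if_pos h2]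
    set u := S.entry i1 j with hu
    set v := S.entry i2 j with hv
    have huv : u < v := S.colStrict i1 i2 j hi h2
    obtain ⟨hu1, hun, hcu⟩ := entry_mem p S hS ((mem_cells p).mpr h1 : ((i1, j) : ℕ × ℕ) ∈ cells p)
    obtain ⟨hv1, hvn, hcv⟩ := entry_mem p S hS ((mem_cells p).mpr h2 : ((i2, j) : ℕ × ℕ) ∈ cells p)
    have hle : dcount p S hS u ≤ dcount p S hS v := dcount_mono p S hS hu1 (le_of_lt huv)
    rcases lt_or_eq_of_le hle with h | h
    · exact h
    · exfalso
      have hnd := no_desc_of_dcount_eq p S hS hu1 (le_of_lt huv) h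
      have hchain := (chain_of_no_desc p S hS hu1 hvn (le_of_lt huv) hnd).1
      rw [hcu, hcv] at hchain
      simp only at hchain
      omega

lemma destd_entry (i j : ℕ) : (destd p S hS).entry i j = destdE p S hS i j := rfl

lemma destd_bound : ∀ i j, cellMem p i j → (destd p S hS).entry i j ≤ n := by
  intro i j h
  rw [destd_entry, destdE, if_pos h]
  obtain ⟨h1, h2, _⟩ := entry_mem p S hS ((mem_cells p).mpr h : ((i, j) : ℕ × ℕ) ∈ cells p)
  exact le_trans (dcount_le p S hS h1) h2

lemma destd_isQY : IsQY p (destd p S hS) := by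
  intro w i j hw hcm hentry hleft
  have hcells : ((i, j) : ℕ × ℕ) ∈ cells p := (mem_cells p).mpr hcm
  obtain ⟨hv1, hvn, hcv⟩ := entry_mem p S hS hcells
  rw [destd_entry, destdE, if_pos hcm] at hentry
  set v := S.entry i j with hv
  -- the descent set below v is nonempty
  have hne : ((Finset.Ico 1 v).filter (fun k => desc p S hS k)).Nonempty := by
    rw [← Finset.card_pos]
    rw [dcount] at hentry
    omega
  set k := ((Finset.Ico 1 v).filter (fun k => desc p S hS k)).max' hne with hk
  have hkmem := Finset.max'_mem _ hne
  rw [← hk] at hkmem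
  rw [Finset.mem_filter, Finset.mem_Ico] at hkmem
  obtain ⟨⟨hk1, hkv⟩, hkd⟩ := hkmem
  -- no descents in (k, v)
  have hnod : ∀ m ∈ Finset.Ico (k + 1) v, ¬ desc p S hS m := by
    intro m hm hd
    rw [Finset.mem_Ico] at hm
    have : m ∈ (Finset.Ico 1 v).filter (fun k => desc p S hS k) :=
      Finset.mem_filter.mpr ⟨Finset.mem_Ico.mpr ⟨by omega, hm.2⟩, hd⟩
    have := Finset.le_max' _ m this
    rw [← hk] at this
    omega
  have hdk1 : dcount p S hS (k + 1) = w := by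
    have hadd := dcount_add p S hS (u := k + 1) (v := v) (by omega) (by omega)
    have hz : ((Finset.Ico (k + 1) v).filter (fun m => desc p S hS m)).card = 0 := by
      rw [Finset.card_eq_zero, Finset.filter_eq_empty_iff]
      exact hnod
    rw [hz] at hadd
    omega
  have hdk : dcount p S hS k = w - 1 := by
    have := dcount_succ p S hS hk1
    rw [if_pos hkd] at this
    omega
  -- the chain from k+1 to v
  obtain ⟨hchr, hchc⟩ := chain_of_no_desc p S hS (u := k + 1) (by omega) hvn (by omega) hnod
  -- cellOf (k+1) is the leftmost occurrence of w, equal to (i, j)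
  have hck1 := cellOf_spec p S hS (v := k + 1) (by omega) (by omega)
  set c := cellOf p S hS (k + 1) with hc
  have hcw : (destd p S hS).entry c.1 c.2 = w := by
    rw [destd_entry, destdE, if_pos hck1.1, hck1.2, hdk1]
  have hjc : j ≤ c.2 := hleft c.1 c.2 hck1.1 hcw
  have hcj : c.2 ≤ j := by
    rcases hchc with h | h
    · rw [h, hcv] at hc
      rw [hc]
    · rw [hcv] at h
      have : c.2 < j := by simpa using h
      omega
  have hc2 : c.2 = j := by omega
  have hdw : (destd p S hS).entry i j = w := by
    rw [destd_entry, destdE, if_pos hcm, ← hv, hentry]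
  rw [hc2] at hcw
  have hc1 : c.1 = i := by
    by_contra hne'
    rcases Nat.lt_or_ge c.1 i with h | h
    · have := (destd p S hS).colStrict c.1 i j h hcm
      omega
    · have h' : i < c.1 := by omega
      have := (destd p S hS).colStrict i c.1 j h' (hc2 ▸ hck1.1)
      omega
  have hceq : c = (i, j) := Prod.ext hc1 hc2
  -- now produce cellOf k
  have hek := cellOf_spec p S hS hk1 (by omega)
  set e := cellOf p S hS k with he
  refine ⟨e.1, e.2, hek.1, ?_, ?_, ?_⟩
  · rw [destd_entry, destdE, if_pos hek.1, hek.2, hdk]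
  · have h' : e.1 < c.1 := hkd
    omega
  · have h' : c.2 ≤ e.2 := col_le_of_desc p S hS hk1 (by omega) hkd
    omega

end DestdTab

section StdDestd
open Finset
variable {n : ℕ} (p : Nat.Partition n) (S : SSYT p) (hS : IsSYT p S)

lemma key_destd_lt_of_entry_lt {c d : ℕ × ℕ} (hc : c ∈ cells p) (hd : d ∈ cells p)
    (h : S.entry c.1 c.2 < S.entry d.1 d.2) :
    key p (destd p S hS) c < key p (destd p S hS) d := by
  obtain ⟨hu1, hun, hcu⟩ := entry_mem p S hS hc
  obtain ⟨hv1, hvn, hcv⟩ := entry_mem p S hS hd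
  have hec : (destd p S hS).entry c.1 c.2 = dcount p S hS (S.entry c.1 c.2) := by
    rw [destd_entry, destdE, if_pos ((mem_cells p).mp hc)]
  have hed : (destd p S hS).entry d.1 d.2 = dcount p S hS (S.entry d.1 d.2) := by
    rw [destd_entry, destdE, if_pos ((mem_cells p).mp hd)]
  have hle : dcount p S hS (S.entry c.1 c.2) ≤ dcount p S hS (S.entry d.1 d.2) :=
    dcount_mono p S hS hu1 (le_of_lt h)
  rw [key_lt_iff]
  rcases lt_or_eq_of_le hle with h' | h'
  · exact Or.inl (by omega)
  · refine Or.inr ⟨by omega, ?_⟩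
    have hnod := no_desc_of_dcount_eq p S hS hu1 (le_of_lt h) h'
    have hchain := (chain_of_no_desc p S hS hu1 hvn (le_of_lt h) hnod).2
    rcases hchain with h'' | h''
    · omega
    · rw [hcu, hcv] at h''
      exact h''

lemma key_destd_lt_iff {c d : ℕ × ℕ} (hc : c ∈ cells p) (hd : d ∈ cells p) (hne : c ≠ d) :
    key p (destd p S hS) c < key p (destd p S hS) d ↔ S.entry c.1 c.2 < S.entry d.1 d.2 := by
  constructor
  · intro hkey
    by_contra hnlt
    rw [not_lt] at hnlt
    rcases lt_or_eq_of_le hnlt with h | h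
    · exact absurd hkey (asymm (key_destd_lt_of_entry_lt p S hS hd hc h))
    · obtain ⟨hu1, hun, hcu⟩ := entry_mem p S hS hc
      obtain ⟨hv1, hvn, hcv⟩ := entry_mem p S hS hd
      rw [h] at hcv
      exact hne (by rw [← hcu, ← hcv])
  · exact key_destd_lt_of_entry_lt p S hS hc hd

lemma std_destd : std p (destd p S hS) = S := by
  apply SSYT.ext'
  funext i j
  show stdE p (destd p S hS) i j = S.entry i j
  by_cases hcm : cellMem p i j
  · have hcells : ((i, j) : ℕ × ℕ) ∈ cells p := (mem_cells p).mpr hcm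
    obtain ⟨h1, h2, hco⟩ := entry_mem p S hS hcells
    have h1 : 1 ≤ S.entry i j := h1
    have h2 : S.entry i j ≤ n := h2
    have hco : cellOf p S hS (S.entry i j) = (i, j) := hco
    rw [stdE, if_pos hcm, rank]
    have hfil : (cells p).filter (fun d => key p (destd p S hS) d < key p (destd p S hS) (i, j))
        = (cells p).filter (fun d => S.entry d.1 d.2 < S.entry i j) := by
      apply Finset.filter_congr
      intro d hdc
      by_cases hdij : d = (i, j)
      · subst hdij
        simp
      · exact key_destd_lt_iff p S hS hdc hcells hdij
    rw [hfil]
    have himg : (cells p).filter (fun d => S.entry d.1 d.2 < S.entry i j)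
        = (Finset.Icc 1 (S.entry i j - 1)).image (fun a => cellOf p S hS a) := by
      ext d
      simp only [Finset.mem_filter, Finset.mem_image, Finset.mem_Icc]
      constructor
      · rintro ⟨hdc, hlt⟩
        obtain ⟨hd1, hdn, hdo⟩ := entry_mem p S hS hdc
        exact ⟨S.entry d.1 d.2, ⟨hd1, by omega⟩, hdo⟩
      · rintro ⟨a, ⟨ha1, ha2⟩, rfl⟩
        have hsp := cellOf_spec p S hS ha1 (by omega : a ≤ n)
        exact ⟨(mem_cells p).mpr hsp.1, by rw [hsp.2]; omega⟩
    rw [himg, Finset.card_image_of_injOn, Nat.card_Icc]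
    · omega
    · intro a ha b hb hab
      simp only [Finset.coe_Icc, Set.mem_Icc] at ha hb
      have e1 := (cellOf_spec p S hS ha.1 (by omega : a ≤ n)).2
      have e2 := (cellOf_spec p S hS hb.1 (by omega : b ≤ n)).2
      have hab' : cellOf p S hS a = cellOf p S hS b := hab
      rw [← hab'] at e2
      omega
  · rw [stdE, if_neg hcm, S.zeros i j hcm]

end StdDestd

section DestdStd
open Finset
variable {n : ℕ} (p : Nat.Partition n)

/-- In an SSYT, two cells with equal entries and increasing columns cannot have
strictly increasing rows. -/
lemma row_le_of_eq_entry (T : SSYT p) {c d : ℕ × ℕ} (hc : c ∈ cells p) (hd : d ∈ cells p)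
    (hT : T.entry c.1 c.2 = T.entry d.1 d.2) (hcol : c.2 < d.2) : d.1 ≤ c.1 := by
  by_contra hlt
  rw [not_le] at hlt
  have hm : cellMem p c.1 d.2 := cellMem_mono_row p ((mem_cells p).mp hd) (le_of_lt hlt)
  have hw : T.entry c.1 c.2 ≤ T.entry c.1 d.2 := T.rowWeak c.1 c.2 d.2 hcol hm
  have hs : T.entry c.1 d.2 < T.entry d.1 d.2 := T.colStrict c.1 d.1 d.2 hlt ((mem_cells p).mp hd)
  omega

lemma rank_cellT (T : SSYT p) {v : ℕ} (h1 : 1 ≤ v) (h2 : v ≤ n) :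
    cellOf p (std p T) (std_isSYT p T) v ∈ cells p ∧
      rank p T (cellOf p (std p T) (std_isSYT p T) v) = v - 1 := by
  obtain ⟨hcm, he⟩ := cellOf_spec p (std p T) (std_isSYT p T) h1 h2
  refine ⟨(mem_cells p).mpr hcm, ?_⟩
  have : stdE p T (cellOf p (std p T) (std_isSYT p T) v).1
      (cellOf p (std p T) (std_isSYT p T) v).2 = v := he
  rw [stdE, if_pos hcm] at this
  show rank p T ((cellOf p (std p T) (std_isSYT p T) v).1,
    (cellOf p (std p T) (std_isSYT p T) v).2) = v - 1
  omega

lemma qy_val (T : SSYT p) (hQ : IsQY p T) :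
    ∀ v, 1 ≤ v → v ≤ n →
      T.entry (cellOf p (std p T) (std_isSYT p T) v).1
          (cellOf p (std p T) (std_isSYT p T) v).2
        = dcount p (std p T) (std_isSYT p T) v := by
  intro v hv1
  induction v, hv1 using Nat.le_induction with
  | base =>
    intro h1n
    obtain ⟨hcm, hr⟩ := rank_cellT p T (le_refl 1) h1n
    set c := cellOf p (std p T) (std_isSYT p T) 1 with hcdef
    have hcm' : cellMem p c.1 c.2 := (mem_cells p).mp hcm
    have hpos : 1 ≤ T.entry c.1 c.2 := T.pos c.1 c.2 hcm'
    rw [dcount_one]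
    by_contra hne
    have hw : 2 ≤ T.entry c.1 c.2 := by omega
    have hleft : ∀ i' j', cellMem p i' j' → T.entry i' j' = T.entry c.1 c.2 → c.2 ≤ j' := by
      intro i' j' hm he
      by_contra hlt
      rw [not_le] at hlt
      have hkey : key p T (i', j') < key p T c :=
        (key_lt_iff p T _ _).mpr (Or.inr ⟨he, hlt⟩)
      have := rank_lt_rank p T ((mem_cells p).mpr hm) hkey
      omega
    obtain ⟨i', j', hm', he', _, _⟩ := hQ (T.entry c.1 c.2) c.1 c.2 hw hcm' rfl hleft
    have hkey : key p T (i', j') < key p T c :=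
      key_lt_of_entry_lt p T (by simp only; omega)
    have := rank_lt_rank p T ((mem_cells p).mpr hm') hkey
    omega
  | succ v hv1 ih =>
    intro hvn
    have ihv := ih (by omega)
    obtain ⟨hcc, hrc⟩ := rank_cellT p T hv1 (by omega)
    obtain ⟨hdc, hrd⟩ := rank_cellT p T (v := v + 1) (by omega) hvn
    set c := cellOf p (std p T) (std_isSYT p T) v with hcdef
    set d := cellOf p (std p T) (std_isSYT p T) (v + 1) with hddef
    have hrd' : rank p T d = v := by omega
    have hcm : cellMem p c.1 c.2 := (mem_cells p).mp hcc
    have hdm : cellMem p d.1 d.2 := (mem_cells p).mp hdc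
    have hkcd : key p T c < key p T d := key_lt_of_rank_lt p T (by omega)
    have hkcd' := (key_lt_iff p T c d).mp hkcd
    -- any cell with rank < v has entry at most T c
    have hsmall : ∀ e : ℕ × ℕ, e ∈ cells p → rank p T e < v → T.entry e.1 e.2 ≤ T.entry c.1 c.2 := by
      intro e he hre
      by_contra hgt
      rw [not_le] at hgt
      have := rank_lt_rank p T hcc (key_lt_of_entry_lt p T hgt)
      omega
    -- any cell with rank < v and entry T c has key at most key c
    rcases Nat.lt_or_ge (T.entry c.1 c.2) (T.entry d.1 d.2) with hlt | hge
    · -- entry increases: show it is a descent and increases by exactly one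
      have hleft : ∀ i' j', cellMem p i' j' → T.entry i' j' = T.entry d.1 d.2 → d.2 ≤ j' := by
        intro i' j' hm he
        by_contra hltc
        rw [not_le] at hltc
        have hkey : key p T (i', j') < key p T d :=
          (key_lt_iff p T _ _).mpr (Or.inr ⟨he, hltc⟩)
        have hr := rank_lt_rank p T ((mem_cells p).mpr hm) hkey
        rw [hrd'] at hr
        have := hsmall (i', j') ((mem_cells p).mpr hm) hr
        simp only at this he
        omega
      have hw2 : 2 ≤ T.entry d.1 d.2 := by
        have := T.pos c.1 c.2 hcm
        omega
      obtain ⟨i', j', hm', he', hrow', hcol'⟩ :=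
        hQ (T.entry d.1 d.2) d.1 d.2 hw2 hdm rfl hleft
      have hem : ((i', j') : ℕ × ℕ) ∈ cells p := (mem_cells p).mpr hm'
      have hkey' : key p T (i', j') < key p T d :=
        key_lt_of_entry_lt p T (by simp only; omega)
      have hre : rank p T (i', j') < v := by
        have := rank_lt_rank p T hem hkey'
        omega
      have hles : T.entry i' j' ≤ T.entry c.1 c.2 := hsmall (i', j') hem hre
      have hTeq : T.entry i' j' = T.entry c.1 c.2 := by omega
      have hkele : key p T (i', j') ≤ key p T c := by
        by_contra hk
        rw [not_le] at hk
        have := rank_lt_rank p T hcc hk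
        omega
      have hdesc : c.1 < d.1 := by
        by_contra hnd
        rw [not_lt] at hnd
        rcases lt_or_eq_of_le hkele with hk | hk
        · rcases (key_lt_iff p T _ _).mp hk with h' | h'
          · simp only at h'; omega
          · -- j' < c.2, equal entries: rows must not increase from (i',j') to c
            have := row_le_of_eq_entry p T hem hcc (by simp only; omega) h'.2
            simp only at this
            omega
        · have := key_injOn p T _ hem _ hcc hk
          have hi' : i' = c.1 := congrArg Prod.fst this
          omega
      have hdesc' : desc p (std p T) (std_isSYT p T) v := hdesc
      have := dcount_succ p (std p T) (std_isSYT p T) hv1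
      rw [if_pos hdesc'] at this
      rw [this, ← ihv]
      omega
    · -- entry stays equal: not a descent
      have heq : T.entry c.1 c.2 = T.entry d.1 d.2 := by
        rcases hkcd' with h' | h'
        · omega
        · exact h'.1
      have hcol : c.2 < d.2 := by
        rcases hkcd' with h' | h'
        · omega
        · exact h'.2
      have hrow : d.1 ≤ c.1 := row_le_of_eq_entry p T hcc hdc heq hcol
      have hndesc : ¬ desc p (std p T) (std_isSYT p T) v := by
        intro hd
        have : c.1 < d.1 := hd
        omega
      have := dcount_succ p (std p T) (std_isSYT p T) hv1
      rw [if_neg hndesc] at this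
      rw [this, ← ihv]
      omega

lemma destd_std (T : SSYT p) (hQ : IsQY p T) :
    destd p (std p T) (std_isSYT p T) = T := by
  apply SSYT.ext'
  funext i j
  show destdE p (std p T) (std_isSYT p T) i j = T.entry i j
  by_cases hcm : cellMem p i j
  · rw [destdE, if_pos hcm]
    have hcells : ((i, j) : ℕ × ℕ) ∈ cells p := (mem_cells p).mpr hcm
    obtain ⟨h1, h2, hco⟩ := entry_mem p (std p T) (std_isSYT p T) hcells
    have hval := qy_val p T hQ ((std p T).entry (i, j).1 (i, j).2) h1 h2
    rw [hco] at hval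
    exact hval.symm
  · rw [destdE, if_neg hcm, T.zeros i j hcm]

end DestdStd

end St2

/-- For a partition `p` of `n`, the number of quasi-Yamanouchi tableaux
of shape `p` with maximum entry at most `n` equals the number of standard Young tableaux
of shape `p`. -/
theorem statement2 (n : ℕ) (p : Nat.Partition n) :
    Nat.card {T : SSYT p // IsQY p T ∧ ∀ i j, cellMem p i j → T.entry i j ≤ n} =
      SYTcount p := by
  rw [SYTcount]
  apply Nat.card_congr
  exact {
    toFun := fun T => ⟨St2.std p T.1, St2.std_isSYT p T.1⟩
    invFun := fun S => ⟨St2.destd p S.1 S.2,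
      St2.destd_isQY p S.1 S.2, St2.destd_bound p S.1 S.2⟩
    left_inv := fun T => Subtype.ext (St2.destd_std p T.1 T.2.1)
    right_inv := fun S => Subtype.ext (St2.std_destd p S.1 S.2) }
end

section
/- Let λ be a partition of n and 1 ≤ m ≤ n. Then the number of quasi-Yamanouchi tableaux of shape λ with maximum entry exactly m equals the number of standard Young tableaux of shape λ with exactly m−1 descents. -/
/-- `QYT_{=m}(p)`: the number of quasi-Yamanouchi tableaux of shape `p` with maximum
entry exactly `m`. -/
noncomputable def QYTeq {n : ℕ} (p : Nat.Partition n) (m : ℕ) : ℕ :=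
  Nat.card {T : SSYT p // IsQY p T ∧ (∀ i j, cellMem p i j → T.entry i j ≤ m) ∧
    ∃ i j, cellMem p i j ∧ T.entry i j = m}
/-- The descent set of a standard Young tableau: those `i ∈ {1, …, n-1}` such that the
entry `i + 1` lies in a strictly higher row than the entry `i`. -/
def DesSet {n : ℕ} (p : Nat.Partition n) (T : SSYT p) : Set ℕ :=
  {i | 1 ≤ i ∧ i ≤ n - 1 ∧ ∃ r c r' c', cellMem p r c ∧ cellMem p r' c' ∧
    T.entry r c = i ∧ T.entry r' c' = i + 1 ∧ r < r'}

open Finset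

variable {n : ℕ} (p : Nat.Partition n)

def colHt (j : ℕ) : ℕ := (p.parts.filter (fun a => j < a)).card

lemma cellMem_iff {i j : ℕ} : cellMem p i j ↔ i < colHt p j := Iff.rfl

lemma part_le {a : ℕ} (ha : a ∈ p.parts) : a ≤ n := by
  have := Multiset.single_le_sum (fun x _ => Nat.zero_le x) a ha
  simpa [p.parts_sum] using this

lemma cell_lt {i j : ℕ} (h : cellMem p i j) : i < n ∧ j < n := by
  have h' : i < colHt p j := h
  have hne : (p.parts.filter (fun a => j < a)) ≠ 0 := by
    intro h0; rw [cellMem_iff, colHt, h0] at h; simp at h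
  obtain ⟨a, ha⟩ := Multiset.exists_mem_of_ne_zero hne
  have hm := Multiset.mem_filter.mp ha
  have han : a ≤ n := part_le p hm.1
  constructor
  · have h1 : colHt p j ≤ Multiset.card p.parts := Multiset.card_le_card (Multiset.filter_le _ _)
    have h2 : Multiset.card p.parts ≤ p.parts.sum := by
      have := Multiset.card_nsmul_le_sum (fun x hx => p.parts_pos hx)
      simpa using this
    have := p.parts_sum
    omega
  · omega

def cells : Finset (ℕ × ℕ) := (range n ×ˢ range n).filter (fun c => cellMem p c.1 c.2)

lemma mem_cells {c : ℕ × ℕ} : c ∈ cells p ↔ cellMem p c.1 c.2 := by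
  constructor
  · intro h; exact (Finset.mem_filter.mp h).2
  · intro h
    refine Finset.mem_filter.mpr ⟨Finset.mem_product.mpr ⟨?_, ?_⟩, h⟩
    · exact Finset.mem_range.mpr (cell_lt p h).1
    · exact Finset.mem_range.mpr (cell_lt p h).2

lemma sum_filter_card (s : Multiset ℕ) (hs : ∀ a ∈ s, a ≤ n) :
    ∑ j ∈ range n, (s.filter (fun a => j < a)).card = s.sum := by
  induction s using Multiset.induction with
  | empty => simp
  | cons a s ih =>
    have ha : a ≤ n := hs a (Multiset.mem_cons_self a s)
    have hs' : ∀ b ∈ s, b ≤ n := fun b hb => hs b (Multiset.mem_cons_of_mem hb)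
    have hj : ∀ j, (Multiset.filter (fun x => j < x) (a ::ₘ s)).card
        = (if j < a then 1 else 0) + (Multiset.filter (fun x => j < x) s).card := by
      intro j
      rw [Multiset.filter_cons]
      split <;> simp <;> omega
    simp only [hj, Finset.sum_add_distrib, ih hs', Multiset.sum_cons]
    congr 1
    rw [← Finset.card_filter]
    have : (range n).filter (fun j => j < a) = range a := by
      ext j; simp; omega
    simp [this]

lemma card_cells : (cells p).card = n := by
  have h1 : cells p = (range n).biUnion
      (fun j => (range (colHt p j)).map ⟨fun i => (i, j), fun a b h => by simpa using h⟩) := by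
    ext ⟨i, j⟩
    simp only [mem_cells, cellMem_iff, Finset.mem_biUnion, Finset.mem_map,
      Function.Embedding.coeFn_mk, Finset.mem_range]
    constructor
    · intro h
      exact ⟨j, (cell_lt p h).2, i, h, rfl⟩
    · rintro ⟨j', _, i', hi', h⟩
      obtain ⟨rfl, rfl⟩ := h
      exact hi'
  rw [h1, Finset.card_biUnion]
  · have := sum_filter_card (n := n) p.parts (fun a ha => part_le p ha)
    simpa [colHt, p.parts_sum] using this
  · intro j1 _ j2 _ hne
    simp only [Finset.disjoint_left]
    intro c hc1 hc2
    simp only [Finset.mem_map, Function.Embedding.coeFn_mk] at hc1 hc2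
    obtain ⟨i1, _, rfl⟩ := hc1
    obtain ⟨i2, _, h⟩ := hc2
    exact hne (congrArg Prod.snd h : j2 = j1).symm

open Finset

variable {n : ℕ} {p : Nat.Partition n}

lemma cellMem_mono_col {i j j' : ℕ} (h : cellMem p i j) (hj : j' ≤ j) : cellMem p i j' := by
  unfold cellMem at *
  refine lt_of_lt_of_le h (Multiset.card_le_card (Multiset.monotone_filter_right _ ?_))
  intro a ha; omega

lemma cellMem_mono_row {i i' j : ℕ} (h : cellMem p i j) (hi : i' ≤ i) : cellMem p i' j :=
  lt_of_le_of_lt hi h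

/-- value of a tableau at a cell given as a pair -/
def tval (T : SSYT p) (c : ℕ × ℕ) : ℕ := T.entry c.1 c.2

lemma SSYT.rowWeak' (T : SSYT p) {i j1 j2 : ℕ} (h : j1 ≤ j2) (hc : cellMem p i j2) :
    T.entry i j1 ≤ T.entry i j2 := by
  rcases eq_or_lt_of_le h with rfl | h
  · exact le_refl _
  · exact T.rowWeak i j1 j2 h hc

/-- Two cells with equal entries: the one in a strictly larger column is in a weakly
lower row. -/
lemma same_val_row {T : SSYT p} {r j r' j' : ℕ} (hc : cellMem p r j) (hc' : cellMem p r' j')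
    (he : T.entry r j = T.entry r' j') (hj : j < j') : r' ≤ r := by
  by_contra hlt
  push_neg at hlt
  have hm : cellMem p r' j := cellMem_mono_col hc' (le_of_lt hj)
  have h1 : T.entry r j < T.entry r' j := T.colStrict r r' j hlt hm
  have h2 : T.entry r' j ≤ T.entry r' j' := T.rowWeak r' j j' hj hc'
  omega

/-- Two cells with equal entries in the same column coincide. -/
lemma same_val_col {T : SSYT p} {r j r' : ℕ} (hc : cellMem p r j) (hc' : cellMem p r' j)
    (he : T.entry r j = T.entry r' j) : r = r' := by
  rcases lt_trichotomy r r' with h | h | h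
  · exact absurd (T.colStrict r r' j h hc') (by omega)
  · exact h
  · exact absurd (T.colStrict r' r j h hc) (by omega)

lemma SSYT.ext' {T T' : SSYT p} (h : ∀ i j, T.entry i j = T'.entry i j) : T = T' := by
  cases T; cases T'
  simp only [SSYT.mk.injEq]
  funext i j
  exact h i j

section SYTBasics

variable {T : SSYT p} (hT : IsSYT p T)

include hT

lemma entry_image : (cells p).image (tval T) = Icc 1 n := by
  have hsub : Icc 1 n ⊆ (cells p).image (tval T) := by
    intro v hv
    simp only [Finset.mem_Icc] at hv
    obtain ⟨c, ⟨hc, he⟩, _⟩ := hT v hv.1 hv.2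
    exact Finset.mem_image.mpr ⟨c, (mem_cells p).mpr hc, he⟩
  refine (Finset.eq_of_subset_of_card_le hsub ?_).symm
  calc ((cells p).image (tval T)).card ≤ (cells p).card := Finset.card_image_le
    _ = n := card_cells p
    _ = (Icc 1 n).card := by simp

lemma entry_mem {c : ℕ × ℕ} (hc : c ∈ cells p) : 1 ≤ tval T c ∧ tval T c ≤ n := by
  have : tval T c ∈ Icc 1 n := entry_image hT ▸ Finset.mem_image_of_mem _ hc
  simpa using this

lemma entry_injOn : ∀ c ∈ cells p, ∀ c' ∈ cells p, tval T c = tval T c' → c = c' := by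
  have hcard : ((cells p).image (tval T)).card = (cells p).card := by
    rw [entry_image hT, card_cells p]; simp
  intro c hc c' hc' he
  exact Finset.injOn_of_card_image_eq hcard hc hc' he

/-- rank identity for SYT: the entry of a cell equals the number of cells with
entry at most it. -/
lemma entry_rank {c : ℕ × ℕ} (hc : c ∈ cells p) :
    ((cells p).filter (fun c' => tval T c' ≤ tval T c)).card = tval T c := by
  have h1 : ((cells p).filter (fun c' => tval T c' ≤ tval T c)).image (tval T)
      = ((cells p).image (tval T)).filter (fun v => v ≤ tval T c) := by
    ext v
    simp only [Finset.mem_image, Finset.mem_filter]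
    constructor
    · rintro ⟨a, ⟨ha, hle⟩, rfl⟩
      exact ⟨⟨a, ha, rfl⟩, hle⟩
    · rintro ⟨⟨a, ha, rfl⟩, hle⟩
      exact ⟨a, ⟨ha, hle⟩, rfl⟩
  have h2 : (((cells p).filter (fun c' => tval T c' ≤ tval T c)).image (tval T)).card
      = ((cells p).filter (fun c' => tval T c' ≤ tval T c)).card := by
    apply Finset.card_image_of_injOn
    intro a ha b hb
    exact entry_injOn hT a (Finset.mem_of_mem_filter a ha) b (Finset.mem_of_mem_filter b hb)
  rw [← h2, h1, entry_image hT]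
  have hm := entry_mem hT hc
  have : (Icc 1 n).filter (fun v => v ≤ tval T c) = Icc 1 (tval T c) := by
    ext v; simp only [Finset.mem_filter, Finset.mem_Icc]; omega
  rw [this]; simp

end SYTBasics

open Finset

variable {n : ℕ} {p : Nat.Partition n}

open Classical in
noncomputable def cellOf (T : SSYT p) (v : ℕ) : ℕ × ℕ :=
  if h : ∃ c : ℕ × ℕ, cellMem p c.1 c.2 ∧ T.entry c.1 c.2 = v then h.choose else (0, 0)

section CellOf

variable {T : SSYT p} (hT : IsSYT p T)

include hT

lemma cellOf_spec {v : ℕ} (h1 : 1 ≤ v) (h2 : v ≤ n) :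
    cellMem p (cellOf T v).1 (cellOf T v).2 ∧ T.entry (cellOf T v).1 (cellOf T v).2 = v := by
  have he := (hT v h1 h2).exists
  rw [cellOf, dif_pos he]
  exact he.choose_spec

lemma cellOf_mem {v : ℕ} (h1 : 1 ≤ v) (h2 : v ≤ n) : cellOf T v ∈ cells p :=
  (mem_cells p).mpr (cellOf_spec hT h1 h2).1

lemma cellOf_unique {v : ℕ} (h1 : 1 ≤ v) (h2 : v ≤ n) {c : ℕ × ℕ}
    (hc : cellMem p c.1 c.2) (he : T.entry c.1 c.2 = v) : c = cellOf T v := by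
  obtain ⟨c₀, hc₀, hu⟩ := hT v h1 h2
  rw [hu c ⟨hc, he⟩, hu (cellOf T v) ⟨(cellOf_spec hT h1 h2).1, (cellOf_spec hT h1 h2).2⟩]

/-- The key dichotomy for consecutive entries in an SYT. -/
lemma consec_dichotomy {v : ℕ} (h1 : 1 ≤ v) (h2 : v + 1 ≤ n) :
    ((cellOf T v).1 < (cellOf T (v+1)).1 ∧ (cellOf T (v+1)).2 ≤ (cellOf T v).2) ∨
    ((cellOf T (v+1)).1 ≤ (cellOf T v).1 ∧ (cellOf T v).2 < (cellOf T (v+1)).2) := by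
  obtain ⟨hc, he⟩ := cellOf_spec hT h1 (by omega)
  obtain ⟨hc', he'⟩ := cellOf_spec hT (by omega) h2
  set r := (cellOf T v).1 with hr
  set j := (cellOf T v).2 with hj
  set r' := (cellOf T (v+1)).1 with hr'
  set j' := (cellOf T (v+1)).2 with hj'
  rcases lt_or_ge r r' with hlt | hge
  · left
    refine ⟨hlt, ?_⟩
    by_contra hcol
    push_neg at hcol
    have hx : cellMem p r' j := cellMem_mono_col hc' (le_of_lt hcol)
    have e1 : T.entry r j < T.entry r' j := T.colStrict r r' j hlt hx
    have e2 : T.entry r' j ≤ T.entry r' j' := T.rowWeak r' j j' hcol hc'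
    have e3 : T.entry r' j = v + 1 := by omega
    have h6 := cellOf_unique hT (by omega) h2 (c := (r', j)) hx e3
    have h7 : j = j' := by
      have := congrArg Prod.snd h6
      rw [← hj'] at this
      exact this
    omega
  · right
    refine ⟨hge, ?_⟩
    by_contra hcol
    push_neg at hcol
    rcases eq_or_lt_of_le hcol with heq | hlt2
    · -- j' = j, same column
      rcases eq_or_lt_of_le hge with heq2 | hlt3
      · rw [heq2, heq] at he'; omega
      · have h5 := T.colStrict r' r j hlt3 hc
        rw [heq] at he'
        omega
    · have hy : cellMem p r j' := cellMem_mono_col hc (le_of_lt hlt2)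
      rcases eq_or_lt_of_le hge with heq2 | hlt3
      · have h5 := T.rowWeak r j' j hlt2 hc
        rw [heq2] at he'
        omega
      · have e1 : T.entry r' j' < T.entry r j' := T.colStrict r' r j' hlt3 hy
        have e2 : T.entry r j' ≤ T.entry r j := T.rowWeak r j' j hlt2 hc
        omega

end CellOf

open Finset

variable {n : ℕ} {p : Nat.Partition n}

open Classical in
/-- The descent set of a tableau, as a Finset, described via `cellOf`. -/
noncomputable def desF (T : SSYT p) : Finset ℕ :=
  (Icc 1 (n-1)).filter (fun v => (cellOf T v).1 < (cellOf T (v+1)).1)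

lemma desF_mem {T : SSYT p} {v : ℕ} :
    v ∈ desF T ↔ 1 ≤ v ∧ v ≤ n - 1 ∧ (cellOf T v).1 < (cellOf T (v+1)).1 := by
  rw [desF]
  classical
  rw [Finset.mem_filter, Finset.mem_Icc]
  tauto

section DesLemmas

variable {T : SSYT p} (hT : IsSYT p T)

include hT

lemma des_geom {v : ℕ} (hv1 : 1 ≤ v) (hv2 : v + 1 ≤ n)
    (hd : (cellOf T v).1 < (cellOf T (v+1)).1) : (cellOf T (v+1)).2 ≤ (cellOf T v).2 :=
  ((consec_dichotomy hT hv1 hv2).resolve_right (by omega)).2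

lemma nondes_geom {v : ℕ} (hv1 : 1 ≤ v) (hv2 : v + 1 ≤ n)
    (hd : ¬ (cellOf T v).1 < (cellOf T (v+1)).1) :
    (cellOf T (v+1)).1 ≤ (cellOf T v).1 ∧ (cellOf T v).2 < (cellOf T (v+1)).2 :=
  (consec_dichotomy hT hv1 hv2).resolve_left (by tauto)

lemma chain {u v : ℕ} (hu : 1 ≤ u) (huv : u < v) (hv : v ≤ n)
    (hnd : ∀ k, u ≤ k → k < v → ¬ ((cellOf T k).1 < (cellOf T (k+1)).1)) :
    (cellOf T v).1 ≤ (cellOf T u).1 ∧ (cellOf T u).2 < (cellOf T v).2 := by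
  induction v, huv using Nat.le_induction with
  | base =>
    exact nondes_geom hT hu (by omega) (hnd u (le_refl _) (by omega))
  | succ v hv' ih =>
    have h1 := ih (by omega) (fun k hk1 hk2 => hnd k hk1 (by omega))
    have h2 := nondes_geom hT (by omega) hv (hnd v (by omega) (by omega))
    exact ⟨le_trans h2.1 h1.1, lt_trans h1.2 h2.2⟩

lemma desSet_eq : DesSet p T = ↑(desF T) := by
  ext i
  simp only [DesSet, Set.mem_setOf_eq, Finset.coe_sort_coe, Finset.mem_coe, desF_mem]
  constructor
  · rintro ⟨h1, h2, r, c, r', c', hc, hc', he, he', hrr⟩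
    have hn2 : 2 ≤ n := by omega
    have e1 : (r, c) = cellOf T i := cellOf_unique hT h1 (by omega) hc he
    have e2 : (r', c') = cellOf T (i+1) := cellOf_unique hT (by omega) (by omega) hc' he'
    refine ⟨h1, h2, ?_⟩
    rw [← e1, ← e2]
    exact hrr
  · rintro ⟨h1, h2, hd⟩
    have hn2 : 2 ≤ n := by omega
    obtain ⟨hc, he⟩ := cellOf_spec hT h1 (by omega)
    obtain ⟨hc', he'⟩ := cellOf_spec hT (v := i + 1) (by omega) (by omega)
    exact ⟨h1, h2, _, _, _, _, hc, hc', he, he', hd⟩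

end DesLemmas

open Finset

variable {n : ℕ} {p : Nat.Partition n}

/-- Destandardization value function associated to a descent set `D`. -/
def fD (D : Finset ℕ) (v : ℕ) : ℕ := 1 + (D.filter (· < v)).card

lemma fD_mono {D : Finset ℕ} {u v : ℕ} (h : u ≤ v) : fD D u ≤ fD D v := by
  unfold fD
  have : D.filter (· < u) ⊆ D.filter (· < v) := by
    intro d hd
    obtain ⟨h1, h2⟩ := Finset.mem_filter.mp hd
    exact Finset.mem_filter.mpr ⟨h1, by omega⟩
  have := Finset.card_le_card this
  omega

lemma fD_lt_of {D : Finset ℕ} {u v d : ℕ} (hd : d ∈ D) (h1 : u ≤ d) (h2 : d < v) :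
    fD D u < fD D v := by
  unfold fD
  have hss : D.filter (· < u) ⊂ D.filter (· < v) := by
    refine Finset.ssubset_iff_of_subset ?_ |>.mpr ?_
    · intro x hx
      obtain ⟨hx1, hx2⟩ := Finset.mem_filter.mp hx
      exact Finset.mem_filter.mpr ⟨hx1, by omega⟩
    · exact ⟨d, Finset.mem_filter.mpr ⟨hd, by omega⟩, by
        intro hmem
        have := (Finset.mem_filter.mp hmem).2
        omega⟩
  have := Finset.card_lt_card hss
  omega

lemma fD_eq_of {D : Finset ℕ} {u v : ℕ} (huv : u ≤ v)
    (h : ∀ d ∈ D, ¬(u ≤ d ∧ d < v)) : fD D u = fD D v := by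
  unfold fD
  have heq : D.filter (· < u) = D.filter (· < v) := by
    ext d
    simp only [Finset.mem_filter]
    constructor
    · rintro ⟨hd, h2⟩; exact ⟨hd, by omega⟩
    · rintro ⟨hd, h2⟩
      refine ⟨hd, ?_⟩
      have := h d hd
      omega
  rw [heq]

lemma fD_step {D : Finset ℕ} (v : ℕ) :
    fD D (v + 1) = fD D v + (if v ∈ D then 1 else 0) := by
  unfold fD
  split
  · rename_i hv
    have : D.filter (· < v + 1) = insert v (D.filter (· < v)) := by
      ext d
      simp only [Finset.mem_filter, Finset.mem_insert]
      constructor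
      · rintro ⟨hd, hlt⟩
        rcases Nat.lt_or_ge d v with h | h
        · exact Or.inr ⟨hd, h⟩
        · left; omega
      · rintro (rfl | ⟨hd, hlt⟩)
        · exact ⟨hv, by omega⟩
        · exact ⟨hd, by omega⟩
    rw [this, Finset.card_insert_of_notMem (by simp)]
    omega
  · rename_i hv
    have : D.filter (· < v + 1) = D.filter (· < v) := by
      ext d
      simp only [Finset.mem_filter]
      constructor
      · rintro ⟨hd, hlt⟩
        refine ⟨hd, ?_⟩
        rcases Nat.lt_or_ge d v with h | h
        · exact h
        · exfalso; have : d = v := by omega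
          exact hv (this ▸ hd)
      · rintro ⟨hd, hlt⟩; exact ⟨hd, by omega⟩
    rw [this]
    omega

lemma fD_le {D : Finset ℕ} (v : ℕ) : fD D v ≤ 1 + D.card := by
  unfold fD
  have := Finset.card_le_card (Finset.filter_subset (· < v) D)
  omega

lemma fD_one {D : Finset ℕ} (hD : ∀ d ∈ D, 1 ≤ d) : fD D 1 = 1 := by
  unfold fD
  have : D.filter (· < 1) = ∅ := by
    ext d
    simp only [Finset.mem_filter, Finset.notMem_empty, iff_false, not_and]
    intro hd
    have := hD d hd
    omega
  rw [this]
  simp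

lemma fD_top {D : Finset ℕ} {v : ℕ} (hD : ∀ d ∈ D, d < v) : fD D v = 1 + D.card := by
  unfold fD
  congr 2
  apply Finset.filter_true_of_mem
  exact fun d hd => hD d hd

lemma desF_bounds {T : SSYT p} {d : ℕ} (hd : d ∈ desF T) : 1 ≤ d ∧ d ≤ n - 1 := by
  have := desF_mem.mp hd
  exact ⟨this.1, this.2.1⟩

section Dstd

/-- Destandardization of a standard Young tableau, using its descent set. -/
noncomputable def dstd (T : SSYT p) (hT : IsSYT p T) : SSYT p where
  entry i j := if cellMem p i j then fD (desF T) (T.entry i j) else 0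
  pos i j h := by simp only [if_pos h]; exact Nat.le_add_right 1 _
  zeros i j h := if_neg h
  rowWeak i j1 j2 hj hc := by
    have hc1 : cellMem p i j1 := cellMem_mono_col hc (le_of_lt hj)
    simp only [if_pos hc1, if_pos hc]
    exact fD_mono (T.rowWeak i j1 j2 hj hc)
  colStrict i1 i2 j hi hc := by
    have hc1 : cellMem p i1 j := cellMem_mono_row hc (le_of_lt hi)
    simp only [if_pos hc1, if_pos hc]
    have hmem1 : (i1, j) ∈ cells p := (mem_cells p).mpr hc1
    have hmem2 : (i2, j) ∈ cells p := (mem_cells p).mpr hc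
    have hub := entry_mem hT hmem1
    have hvb := entry_mem hT hmem2
    simp only [tval] at hub hvb
    have huv : T.entry i1 j < T.entry i2 j := T.colStrict i1 i2 j hi hc
    have hex : ∃ k, k ∈ desF T ∧ T.entry i1 j ≤ k ∧ k < T.entry i2 j := by
      by_contra hno
      push_neg at hno
      have hnd : ∀ k, T.entry i1 j ≤ k → k < T.entry i2 j →
          ¬ ((cellOf T k).1 < (cellOf T (k+1)).1) := by
        intro k hk1 hk2 hdes
        have hkF : k ∈ desF T := desF_mem.mpr ⟨by omega, by omega, hdes⟩
        have := hno k hkF hk1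
        omega
      have hch := chain hT hub.1 huv hvb.2 hnd
      have e1 : (i1, j) = cellOf T (T.entry i1 j) := cellOf_unique hT hub.1 hub.2 hc1 rfl
      have e2 : (i2, j) = cellOf T (T.entry i2 j) := cellOf_unique hT hvb.1 hvb.2 hc rfl
      rw [← e1, ← e2] at hch
      simp only at hch
      omega
    obtain ⟨k, hkF, hk1, hk2⟩ := hex
    exact fD_lt_of hkF hk1 hk2

lemma dstd_entry {T : SSYT p} (hT : IsSYT p T) {i j : ℕ} (h : cellMem p i j) :
    (dstd T hT).entry i j = fD (desF T) (T.entry i j) := if_pos h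

end Dstd

open Finset

variable {n : ℕ} {p : Nat.Partition n}

section DstdProps

variable {T : SSYT p} (hT : IsSYT p T)

lemma dstd_le {i j : ℕ} (h : cellMem p i j) :
    (dstd T hT).entry i j ≤ 1 + (desF T).card := by
  rw [dstd_entry hT h]
  exact fD_le _

include hT in
lemma dstd_max (hn : 1 ≤ n) : ∃ i j, cellMem p i j ∧
    (dstd T hT).entry i j = 1 + (desF T).card := by
  obtain ⟨hc, he⟩ := cellOf_spec hT (v := n) hn (le_refl n)
  refine ⟨(cellOf T n).1, (cellOf T n).2, hc, ?_⟩
  rw [dstd_entry hT hc, he]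
  exact fD_top (fun d hd => by have := desF_bounds hd; omega)

include hT in
lemma dstd_qy : IsQY p (dstd T hT) := by
  intro w i j hw hc he hleft
  set D := desF T with hD
  rw [dstd_entry hT hc] at he
  have hmem : (i, j) ∈ cells p := (mem_cells p).mpr hc
  have hub := entry_mem hT hmem
  simp only [tval] at hub
  -- the minimal T-value in the block of value w
  set s := (Icc 1 n).filter (fun v => fD D v = w) with hs
  have hus : T.entry i j ∈ s := by
    rw [hs, Finset.mem_filter, Finset.mem_Icc]
    exact ⟨⟨hub.1, hub.2⟩, he⟩
  have hne : s.Nonempty := ⟨_, hus⟩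
  set u0 := s.min' hne with hu0
  have hu0s : u0 ∈ s := s.min'_mem hne
  have hmin : ∀ x ∈ s, u0 ≤ x := fun x hx => s.min'_le x hx
  obtain ⟨hu0b, hu0f⟩ := Finset.mem_filter.mp hu0s
  rw [Finset.mem_Icc] at hu0b
  have hu02 : 2 ≤ u0 := by
    rcases Nat.lt_or_ge u0 2 with h | h
    · exfalso
      have h1 : u0 = 1 := by omega
      rw [h1] at hu0f
      rw [fD_one (fun d hd => (desF_bounds hd).1)] at hu0f
      omega
    · exact h
  have hstep := fD_step (D := D) (u0 - 1)
  rw [show u0 - 1 + 1 = u0 by omega] at hstep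
  have hprev_lt : fD D (u0 - 1) < w := by
    have hle : fD D (u0 - 1) ≤ fD D u0 := fD_mono (by omega)
    rcases eq_or_lt_of_le hle with hne2 | h
    · exfalso
      have : u0 - 1 ∈ s := by
        rw [hs, Finset.mem_filter, Finset.mem_Icc]
        exact ⟨⟨by omega, by omega⟩, by omega⟩
      have := hmin _ this
      omega
    · omega
  have hmemD : u0 - 1 ∈ D ∧ fD D (u0 - 1) = w - 1 := by
    by_cases hcase : u0 - 1 ∈ D
    · rw [if_pos hcase] at hstep
      exact ⟨hcase, by omega⟩
    · rw [if_neg hcase] at hstep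
      omega
  have hdes : (cellOf T (u0 - 1)).1 < (cellOf T u0).1 := by
    have := desF_mem.mp hmemD.1
    rw [show u0 - 1 + 1 = u0 by omega] at this
    exact this.2.2
  have hgeom : (cellOf T u0).2 ≤ (cellOf T (u0 - 1)).2 := by
    have := des_geom hT (v := u0 - 1) (by omega) (by omega) (by
      rw [show u0 - 1 + 1 = u0 by omega]; exact hdes)
    rw [show u0 - 1 + 1 = u0 by omega] at this
    exact this
  -- the given leftmost cell is `cellOf T u0`
  have heq : (i, j) = cellOf T u0 := by
    rcases eq_or_lt_of_le (hmin _ hus) with h | h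
    · have e := cellOf_unique hT (c := (i, j)) hub.1 hub.2 hc rfl
      rw [← h] at e
      exact e
    · exfalso
      -- T.entry i j > u0 : chain gives contradiction with leftmost
      have hnd : ∀ k, u0 ≤ k → k < T.entry i j → ¬ ((cellOf T k).1 < (cellOf T (k+1)).1) := by
        intro k hk1 hk2 hdk
        have hkF : k ∈ desF T := desF_mem.mpr ⟨by omega, by omega, hdk⟩
        have h9 := fD_lt_of (D := D) hkF hk1 hk2
        rw [hu0f, he] at h9
        exact lt_irrefl w h9
      have hch := chain hT (by omega) h (by omega) hnd
      have e2 : (i, j) = cellOf T (T.entry i j) :=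
        cellOf_unique hT (c := (i, j)) hub.1 hub.2 hc rfl
      obtain ⟨hc0, he0⟩ := cellOf_spec hT (v := u0) (by omega) (by omega)
      have hl := hleft (cellOf T u0).1 (cellOf T u0).2 hc0 (by
        rw [dstd_entry hT hc0, he0]; exact hu0f)
      rw [← e2] at hch
      simp only at hch
      omega
  obtain ⟨hc1, he1⟩ := cellOf_spec hT (v := u0 - 1) (by omega) (by omega)
  refine ⟨(cellOf T (u0-1)).1, (cellOf T (u0-1)).2, hc1, ?_, ?_, ?_⟩
  · rw [dstd_entry hT hc1, he1]
    exact hmemD.2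
  · have h8 : i = (cellOf T u0).1 := congrArg Prod.fst heq
    omega
  · have : j = (cellOf T u0).2 := congrArg Prod.snd heq
    omega

end DstdProps

open Finset

section Rank

variable {α : Type*} [LinearOrder α]

lemma filter_le_card_eq (t : Finset α) {x : α} (hx : x ∈ t) :
    (t.filter (· ≤ x)).card = ((t.orderIsoOfFin rfl).symm ⟨x, hx⟩ : Fin t.card).val + 1 := by
  set e := t.orderIsoOfFin rfl with he
  have himg : t.filter (· ≤ x) = (Finset.Iic (e.symm ⟨x, hx⟩)).image (fun i => (e i : α)) := by
    ext y
    simp only [Finset.mem_filter, Finset.mem_image, Finset.mem_Iic]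
    constructor
    · rintro ⟨hy, hyx⟩
      refine ⟨e.symm ⟨y, hy⟩, ?_, by simp⟩
      rw [e.symm.le_iff_le]
      exact Subtype.mk_le_mk.mpr hyx
    · rintro ⟨i, hi, rfl⟩
      refine ⟨(e i).2, ?_⟩
      have : e i ≤ e (e.symm ⟨x, hx⟩) := by
        rw [e.le_iff_le]
        exact hi
      have h2 : e i ≤ ⟨x, hx⟩ := by simpa using this
      exact h2
  rw [himg, Finset.card_image_of_injective _
    (show Function.Injective (fun i => ((e i : {y // y ∈ t}) : α)) from
      fun a b hab => e.injective (Subtype.val_injective hab)),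
    Fin.card_Iic]

variable {β : Type*} [DecidableEq β] (s : Finset β) (f : β → α)

/-- rank of an element in a finite set with respect to an injective key -/
def rk (c : β) : ℕ := (s.filter (fun c' => f c' ≤ f c)).card

variable (hinj : ∀ c ∈ s, ∀ c' ∈ s, f c = f c' → c = c')

include hinj

lemma rk_eq_image {c : β} (hc : c ∈ s) :
    rk s f c = ((s.image f).filter (· ≤ f c)).card := by
  rw [rk, ← Finset.card_image_of_injOn (f := f) (fun a ha b hb hab =>
    hinj a (Finset.mem_of_mem_filter a ha) b (Finset.mem_of_mem_filter b hb) hab)]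
  congr 1
  ext y
  simp only [Finset.mem_image, Finset.mem_filter]
  constructor
  · rintro ⟨a, ⟨ha, hle⟩, rfl⟩
    exact ⟨⟨a, ha, rfl⟩, hle⟩
  · rintro ⟨⟨a, ha, rfl⟩, hle⟩
    exact ⟨a, ⟨ha, hle⟩, rfl⟩

lemma rk_eq_symm {c : β} (hc : c ∈ s) :
    rk s f c = (((s.image f).orderIsoOfFin rfl).symm
      ⟨f c, Finset.mem_image_of_mem f hc⟩ : Fin (s.image f).card).val + 1 := by
  rw [rk_eq_image s f hinj hc, filter_le_card_eq]

lemma rk_pos {c : β} (hc : c ∈ s) : 1 ≤ rk s f c := by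
  rw [rk_eq_symm s f hinj hc]; omega

lemma rk_le {c : β} (hc : c ∈ s) : rk s f c ≤ s.card := by
  rw [rk]
  exact le_trans (Finset.card_le_card (Finset.filter_subset _ _)) (le_refl _)

lemma rk_lt_iff {c c' : β} (hc : c ∈ s) (hc' : c' ∈ s) :
    f c < f c' ↔ rk s f c < rk s f c' := by
  rw [rk_eq_symm s f hinj hc, rk_eq_symm s f hinj hc']
  set e := (s.image f).orderIsoOfFin rfl
  constructor
  · intro h
    have : e.symm ⟨f c, Finset.mem_image_of_mem f hc⟩ <
        e.symm ⟨f c', Finset.mem_image_of_mem f hc'⟩ := by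
      rw [e.symm.lt_iff_lt]
      exact Subtype.mk_lt_mk.mpr h
    omega
  · intro h
    have h2 : e.symm ⟨f c, Finset.mem_image_of_mem f hc⟩ <
        e.symm ⟨f c', Finset.mem_image_of_mem f hc'⟩ := by
      rcases Fin.lt_or_le (e.symm ⟨f c, Finset.mem_image_of_mem f hc⟩)
        (e.symm ⟨f c', Finset.mem_image_of_mem f hc'⟩) with hh | hh
      · exact hh
      · exfalso
        have : (e.symm ⟨f c', Finset.mem_image_of_mem f hc'⟩).val ≤
            (e.symm ⟨f c, Finset.mem_image_of_mem f hc⟩).val := hh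
        omega
    rw [e.symm.lt_iff_lt] at h2
    exact Subtype.mk_lt_mk.mp h2

lemma rk_le_iff {c c' : β} (hc : c ∈ s) (hc' : c' ∈ s) :
    f c ≤ f c' ↔ rk s f c ≤ rk s f c' := by
  constructor
  · intro h
    rcases eq_or_lt_of_le h with heq | hlt
    · have : c = c' := hinj c hc c' hc' heq
      rw [this]
    · exact le_of_lt ((rk_lt_iff s f hinj hc hc').mp hlt)
  · intro h
    by_contra hcon
    push_neg at hcon
    have := (rk_lt_iff s f hinj hc' hc).mp hcon
    omega

lemma rk_injOn {c c' : β} (hc : c ∈ s) (hc' : c' ∈ s) (h : rk s f c = rk s f c') : c = c' := by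
  have h1 : f c ≤ f c' := (rk_le_iff s f hinj hc hc').mpr (le_of_eq h)
  have h2 : f c' ≤ f c := (rk_le_iff s f hinj hc' hc).mpr (le_of_eq h.symm)
  exact hinj c hc c' hc' (le_antisymm h1 h2)

lemma rk_surj {v : ℕ} (hv1 : 1 ≤ v) (hv2 : v ≤ s.card) : ∃ c ∈ s, rk s f c = v := by
  have hcard : (s.image f).card = s.card := Finset.card_image_of_injOn
    (fun a ha b hb hab => hinj a ha b hb hab)
  set e := (s.image f).orderIsoOfFin rfl with he
  have hvk : v - 1 < (s.image f).card := by omega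
  set x := e ⟨v - 1, hvk⟩ with hx
  obtain ⟨c, hc, hfc⟩ := Finset.mem_image.mp x.2
  refine ⟨c, hc, ?_⟩
  rw [rk_eq_symm s f hinj hc]
  have hsub : (⟨f c, Finset.mem_image_of_mem f hc⟩ : {y // y ∈ s.image f}) = x :=
    Subtype.ext hfc
  rw [hsub, hx, e.symm_apply_apply]
  simp
  omega

end Rank

open Finset

variable {n : ℕ} {p : Nat.Partition n}

/-- The standardization key of a cell: (value, column), ordered lexicographically. -/
def skey (S : SSYT p) (c : ℕ × ℕ) : ℕ ×ₗ ℕ := toLex (S.entry c.1 c.2, c.2)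

lemma skey_lt_iff {S : SSYT p} {c c' : ℕ × ℕ} :
    skey S c < skey S c' ↔ (S.entry c.1 c.2 < S.entry c'.1 c'.2 ∨
      (S.entry c.1 c.2 = S.entry c'.1 c'.2 ∧ c.2 < c'.2)) := by
  rw [skey, skey, Prod.Lex.lt_iff]; exact Iff.rfl

lemma skey_inj (S : SSYT p) : ∀ c ∈ cells p, ∀ c' ∈ cells p, skey S c = skey S c' → c = c' := by
  intro c hc c' hc' h
  rw [skey, skey] at h
  have h2 : (S.entry c.1 c.2, c.2) = (S.entry c'.1 c'.2, c'.2) := toLex_inj.mp h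
  have hval : S.entry c.1 c.2 = S.entry c'.1 c'.2 := (Prod.mk.injEq _ _ _ _ ▸ h2).1
  have hcol : c.2 = c'.2 := (Prod.mk.injEq _ _ _ _ ▸ h2).2
  have hcm : cellMem p c.1 c.2 := (mem_cells p).mp hc
  have hcm' : cellMem p c'.1 c'.2 := (mem_cells p).mp hc'
  rw [hcol] at hcm hval
  have : c.1 = c'.1 := same_val_col hcm hcm' hval
  exact Prod.ext this hcol

/-- Standardization of a semistandard Young tableau. -/
def std (S : SSYT p) : SSYT p where
  entry i j := if cellMem p i j then rk (cells p) (skey S) (i, j) else 0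
  pos i j h := by
    simp only [if_pos h]
    exact rk_pos (cells p) (skey S) (skey_inj S) ((mem_cells p).mpr h)
  zeros i j h := if_neg h
  rowWeak i j1 j2 hj hc := by
    have hc1 : cellMem p i j1 := cellMem_mono_col hc (le_of_lt hj)
    simp only [if_pos hc1, if_pos hc]
    refine le_of_lt ((rk_lt_iff (cells p) (skey S) (skey_inj S)
      ((mem_cells p).mpr hc1) ((mem_cells p).mpr hc)).mp ?_)
    rw [skey_lt_iff]
    simp only
    rcases eq_or_lt_of_le (S.rowWeak i j1 j2 hj hc) with heq | hlt
    · exact Or.inr ⟨heq, hj⟩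
    · exact Or.inl hlt
  colStrict i1 i2 j hi hc := by
    have hc1 : cellMem p i1 j := cellMem_mono_row hc (le_of_lt hi)
    simp only [if_pos hc1, if_pos hc]
    refine (rk_lt_iff (cells p) (skey S) (skey_inj S)
      ((mem_cells p).mpr hc1) ((mem_cells p).mpr hc)).mp ?_
    rw [skey_lt_iff]
    exact Or.inl (S.colStrict i1 i2 j hi hc)

lemma std_entry (S : SSYT p) {i j : ℕ} (h : cellMem p i j) :
    (std S).entry i j = rk (cells p) (skey S) (i, j) := if_pos h

lemma std_isSYT (S : SSYT p) : IsSYT p (std S) := by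
  intro v hv1 hv2
  obtain ⟨c, hc, hrk⟩ := rk_surj (cells p) (skey S) (skey_inj S) hv1 (by rw [card_cells]; exact hv2)
  refine ⟨c, ⟨(mem_cells p).mp hc, ?_⟩, ?_⟩
  · rw [show (std S).entry c.1 c.2 = rk (cells p) (skey S) (c.1, c.2) from
      std_entry S ((mem_cells p).mp hc)]
    simpa using hrk
  · rintro c' ⟨hc', he'⟩
    have hc'm : c' ∈ cells p := (mem_cells p).mpr hc'
    rw [show (std S).entry c'.1 c'.2 = rk (cells p) (skey S) (c'.1, c'.2) from
      std_entry S hc'] at he'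
    apply rk_injOn (cells p) (skey S) (skey_inj S) hc'm hc
    simp only [show ((c' : ℕ × ℕ).1, c'.2) = c' from rfl] at he' ⊢
    rw [he', hrk]

open Finset

variable {n : ℕ} {p : Nat.Partition n}

section QYVals

variable {S : SSYT p} {m : ℕ} (hqy : IsQY p S)

include hqy in
lemma all_values (hmax : ∃ i j, cellMem p i j ∧ S.entry i j = m) :
    ∀ w, 1 ≤ w → w ≤ m → ∃ i j, cellMem p i j ∧ S.entry i j = w := by
  have key : ∀ k, k + 1 ≤ m → ∃ i j, cellMem p i j ∧ S.entry i j = m - k := by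
    intro k
    induction k with
    | zero => intro _; simpa using hmax
    | succ k ih =>
      intro hk
      obtain ⟨i, j, hc, he⟩ := ih (by omega)
      -- find leftmost occurrence of m - k
      have hne : ((cells p).filter (fun c => S.entry c.1 c.2 = m - k)).Nonempty :=
        ⟨(i, j), Finset.mem_filter.mpr ⟨(mem_cells p).mpr hc, he⟩⟩
      obtain ⟨c0, hc0, hmin⟩ := Finset.exists_min_image _ (fun c => c.2) hne
      obtain ⟨hc0m, hc0e⟩ := Finset.mem_filter.mp hc0
      obtain ⟨i', j', h1, h2, h3, h4⟩ := hqy (m - k) c0.1 c0.2 (by omega)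
        ((mem_cells p).mp hc0m) hc0e
        (fun i' j' hcm hce => hmin (i', j') (Finset.mem_filter.mpr ⟨(mem_cells p).mpr hcm, hce⟩))
      exact ⟨i', j', h1, by omega⟩
  intro w hw1 hw2
  obtain ⟨i, j, hc, he⟩ := key (m - w) (by omega)
  exact ⟨i, j, hc, by omega⟩

end QYVals

section StdFd

variable {S : SSYT p} {m : ℕ}

lemma skey_le_iff {c c' : ℕ × ℕ} :
    skey S c ≤ skey S c' ↔ (S.entry c.1 c.2 < S.entry c'.1 c'.2 ∨
      (S.entry c.1 c.2 = S.entry c'.1 c'.2 ∧ c.2 ≤ c'.2)) := by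
  rw [skey, skey, Prod.Lex.le_iff]; exact Iff.rfl

/-- On a cell, `std S` takes value the rank of the cell. -/
lemma std_rk {c : ℕ × ℕ} (hc : c ∈ cells p) :
    (std S).entry c.1 c.2 = rk (cells p) (skey S) c := by
  rw [std_entry S ((mem_cells p).mp hc)]

/-- Main computation: destandardizing the standardization of a QY tableau
recovers its values. -/
lemma std_fD (hqy : IsQY p S) (hbd : ∀ i j, cellMem p i j → S.entry i j ≤ m)
    (hmax : ∃ i j, cellMem p i j ∧ S.entry i j = m) (hm : 1 ≤ m) :
    ∀ v, 1 ≤ v → v ≤ n →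
      fD (desF (std S)) v =
        S.entry (cellOf (std S) v).1 (cellOf (std S) v).2 := by
  have hT : IsSYT p (std S) := std_isSYT S
  intro v hv1
  induction v, hv1 using Nat.le_induction with
  | base =>
    intro hn
    obtain ⟨hc, he⟩ := cellOf_spec hT (v := 1) (le_refl _) hn
    rw [fD_one (fun d hd => (desF_bounds hd).1)]
    obtain ⟨i0, j0, hc0, he0⟩ := all_values hqy hmax 1 (le_refl _) hm
    set c1 := cellOf (std S) 1 with hc1
    have hc1m : c1 ∈ cells p := (mem_cells p).mpr hc
    have h0m : (i0, j0) ∈ cells p := (mem_cells p).mpr hc0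
    have hrk1 : rk (cells p) (skey S) c1 = 1 := by rw [← std_rk hc1m]; exact he
    by_contra hne
    have hgt : 1 < S.entry c1.1 c1.2 := by
      have := S.pos c1.1 c1.2 hc
      omega
    have hlt : skey S (i0, j0) < skey S c1 := by
      rw [skey_lt_iff]
      left
      simpa [he0] using hgt
    have := (rk_lt_iff (cells p) (skey S) (skey_inj S) h0m hc1m).mp hlt
    have := rk_pos (cells p) (skey S) (skey_inj S) h0m
    omega
  | succ v hv ih =>
    intro hvn
    have ihv := ih (by omega)
    set T := std S with hTdef
    obtain ⟨hcm, hce⟩ := cellOf_spec hT (v := v) (by omega) (by omega)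
    obtain ⟨hcm', hce'⟩ := cellOf_spec hT (v := v + 1) (by omega) hvn
    set c := cellOf T v with hcdef
    set c' := cellOf T (v+1) with hcdef'
    have hcmem : c ∈ cells p := (mem_cells p).mpr hcm
    have hcmem' : c' ∈ cells p := (mem_cells p).mpr hcm'
    have hrkc : rk (cells p) (skey S) c = v := by rw [← std_rk hcmem]; exact hce
    have hrkc' : rk (cells p) (skey S) c' = v + 1 := by rw [← std_rk hcmem']; exact hce'
    have hkey : skey S c < skey S c' := by
      refine (rk_lt_iff (cells p) (skey S) (skey_inj S) hcmem hcmem').mpr ?_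
      omega
    have hvle : S.entry c.1 c.2 ≤ S.entry c'.1 c'.2 := by
      rw [skey_lt_iff] at hkey
      rcases hkey with h | ⟨h, _⟩
      · omega
      · omega
    have hvle2 : S.entry c'.1 c'.2 ≤ S.entry c.1 c.2 + 1 := by
      by_contra hcon
      push_neg at hcon
      have hwm : S.entry c.1 c.2 + 1 ≤ m := le_trans (by omega) (hbd c'.1 c'.2 hcm')
      obtain ⟨is, js, hcs, hes⟩ := all_values hqy hmax (S.entry c.1 c.2 + 1) (by omega) hwm
      have hsm : (is, js) ∈ cells p := (mem_cells p).mpr hcs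
      have hk1 : skey S c < skey S (is, js) := skey_lt_iff.mpr (Or.inl (by
        show S.entry c.1 c.2 < S.entry is js
        omega))
      have hk2 : skey S (is, js) < skey S c' := skey_lt_iff.mpr (Or.inl (by
        show S.entry is js < S.entry c'.1 c'.2
        omega))
      have r1 := (rk_lt_iff (cells p) (skey S) (skey_inj S) hcmem hsm).mp hk1
      have r2 := (rk_lt_iff (cells p) (skey S) (skey_inj S) hsm hcmem').mp hk2
      omega
    rcases eq_or_lt_of_le hvle with heq | hlt
    · -- equal values across the step: not a descent
      have hcol : c.2 < c'.2 := by
        rw [skey_lt_iff] at hkey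
        rcases hkey with h | ⟨_, h⟩
        · omega
        · exact h
      have hrow : c'.1 ≤ c.1 := same_val_row hcm hcm' heq hcol
      have hnotD : v ∉ desF T := by
        intro hvD
        have h9 := (desF_mem.mp hvD).2.2
        rw [← hcdef, ← hcdef'] at h9
        omega
      rw [fD_step, if_neg hnotD]
      omega
    · -- value jumps by one: this is a descent
      have hval' : S.entry c'.1 c'.2 = S.entry c.1 c.2 + 1 := by omega
      have hleft : ∀ i' j', cellMem p i' j' → S.entry i' j' = S.entry c'.1 c'.2 →
          c'.2 ≤ j' := by
        intro i' j' hcm2 he2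
        have hmem2 : (i', j') ∈ cells p := (mem_cells p).mpr hcm2
        have hk : skey S c < skey S (i', j') := skey_lt_iff.mpr (Or.inl (by
          show S.entry c.1 c.2 < S.entry i' j'
          omega))
        have hr := (rk_lt_iff (cells p) (skey S) (skey_inj S) hcmem hmem2).mp hk
        have hkle : skey S c' ≤ skey S (i', j') :=
          (rk_le_iff (cells p) (skey S) (skey_inj S) hcmem' hmem2).mpr (by omega)
        rw [skey_le_iff] at hkle
        rcases hkle with h | ⟨_, h⟩
        · exfalso
          have : S.entry (i', j').1 (i', j').2 = S.entry i' j' := rfl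
          omega
        · exact h
      obtain ⟨i', j', h1, h2, h3, h4⟩ := hqy (S.entry c'.1 c'.2) c'.1 c'.2 (by
        have := S.pos c.1 c.2 hcm
        omega) hcm' rfl hleft
      have h2' : S.entry i' j' = S.entry c.1 c.2 := by
        have := S.pos c.1 c.2 hcm
        omega
      have hmem3 : (i', j') ∈ cells p := (mem_cells p).mpr h1
      have hk3 : skey S (i', j') < skey S c' := skey_lt_iff.mpr (Or.inl (by
        show S.entry i' j' < S.entry c'.1 c'.2
        omega))
      have hr3 := (rk_lt_iff (cells p) (skey S) (skey_inj S) hmem3 hcmem').mp hk3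
      have hkle3 : skey S (i', j') ≤ skey S c :=
        (rk_le_iff (cells p) (skey S) (skey_inj S) hmem3 hcmem).mpr (by omega)
      have hjc : j' ≤ c.2 := by
        rw [skey_le_iff] at hkle3
        rcases hkle3 with h | ⟨_, h⟩
        · exfalso
          have he9 : S.entry (i', j').1 (i', j').2 = S.entry i' j' := rfl
          omega
        · exact h
      have hrowle : c.1 ≤ i' := by
        rcases eq_or_lt_of_le hjc with hjeq | hjlt
        · have hcells : (i', j') = c := skey_inj S _ hmem3 _ hcmem (by
            rw [skey, skey]
            exact congrArg toLex (by
              rw [Prod.mk.injEq]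
              exact ⟨h2', hjeq⟩))
          have : (i', j').1 = c.1 := congrArg Prod.fst hcells
          simp only at this
          omega
        · exact same_val_row (T := S) h1 hcm h2' hjlt
      have hdes : c.1 < c'.1 := by omega
      have hvD : v ∈ desF T := desF_mem.mpr ⟨by omega, by omega, by
        rw [← hcdef, ← hcdef']
        exact hdes⟩
      rw [fD_step, if_pos hvD]
      omega

end StdFd

open Finset

variable {n : ℕ} {p : Nat.Partition n}

section Inverses

variable {S : SSYT p} {m : ℕ}

lemma std_desF_card (hqy : IsQY p S) (hbd : ∀ i j, cellMem p i j → S.entry i j ≤ m)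
    (hmax : ∃ i j, cellMem p i j ∧ S.entry i j = m) (hm : 1 ≤ m) (hmn : m ≤ n) :
    (desF (std S)).card = m - 1 := by
  have hT : IsSYT p (std S) := std_isSYT S
  have hn : 1 ≤ n := le_trans hm hmn
  have htop : fD (desF (std S)) n = 1 + (desF (std S)).card :=
    fD_top (fun d hd => by have := desF_bounds (T := std S) hd; omega)
  have h1 := std_fD hqy hbd hmax hm n hn (le_refl n)
  obtain ⟨hcn, hen⟩ := cellOf_spec hT (v := n) hn (le_refl n)
  have hbd1 : fD (desF (std S)) n ≤ m := by
    rw [h1]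
    exact hbd _ _ hcn
  obtain ⟨i, j, hc, he⟩ := hmax
  have hmem : (i, j) ∈ cells p := (mem_cells p).mpr hc
  have hvb := entry_mem hT hmem
  simp only [tval] at hvb
  have heq : (i, j) = cellOf (std S) ((std S).entry i j) :=
    cellOf_unique hT (c := (i, j)) hvb.1 hvb.2 hc rfl
  have h2 := std_fD hqy hbd ⟨i, j, hc, he⟩ hm ((std S).entry i j) hvb.1 hvb.2
  rw [← heq] at h2
  have h3 : fD (desF (std S)) ((std S).entry i j) ≤ fD (desF (std S)) n := fD_mono hvb.2
  have he' : S.entry (i, j).1 (i, j).2 = m := he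
  omega

lemma dstd_std (hqy : IsQY p S) (hbd : ∀ i j, cellMem p i j → S.entry i j ≤ m)
    (hmax : ∃ i j, cellMem p i j ∧ S.entry i j = m) (hm : 1 ≤ m) (hmn : m ≤ n) :
    dstd (std S) (std_isSYT S) = S := by
  have hT : IsSYT p (std S) := std_isSYT S
  apply SSYT.ext'
  intro i j
  by_cases h : cellMem p i j
  · rw [dstd_entry hT h]
    have hmem : (i, j) ∈ cells p := (mem_cells p).mpr h
    have hvb := entry_mem hT hmem
    simp only [tval] at hvb
    have heq : (i, j) = cellOf (std S) ((std S).entry i j) :=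
      cellOf_unique hT (c := (i, j)) hvb.1 hvb.2 h rfl
    have h2 := std_fD hqy hbd hmax hm ((std S).entry i j) hvb.1 hvb.2
    rw [← heq] at h2
    exact h2
  · rw [(dstd (std S) hT).zeros i j h, S.zeros i j h]

variable {T : SSYT p}

lemma dstd_skey_lt (hT : IsSYT p T) {c c' : ℕ × ℕ} (hc : c ∈ cells p) (hc' : c' ∈ cells p)
    (hlt : T.entry c.1 c.2 < T.entry c'.1 c'.2) :
    skey (dstd T hT) c < skey (dstd T hT) c' := by
  have hcm : cellMem p c.1 c.2 := (mem_cells p).mp hc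
  have hcm' : cellMem p c'.1 c'.2 := (mem_cells p).mp hc'
  have hub := entry_mem hT hc
  have hvb := entry_mem hT hc'
  simp only [tval] at hub hvb
  have hfle : fD (desF T) (T.entry c.1 c.2) ≤ fD (desF T) (T.entry c'.1 c'.2) :=
    fD_mono (le_of_lt hlt)
  rw [skey_lt_iff]
  rcases eq_or_lt_of_le hfle with hfeq | hflt
  · -- equal destandardized values: no descent in between, so columns increase
    right
    refine ⟨by rw [dstd_entry hT hcm, dstd_entry hT hcm', hfeq], ?_⟩
    have hnd : ∀ k, T.entry c.1 c.2 ≤ k → k < T.entry c'.1 c'.2 →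
        ¬ ((cellOf T k).1 < (cellOf T (k+1)).1) := by
      intro k hk1 hk2 hdes
      have hkF : k ∈ desF T := desF_mem.mpr ⟨by omega, by omega, hdes⟩
      have := fD_lt_of (D := desF T) hkF hk1 hk2
      omega
    have hch := chain hT hub.1 hlt hvb.2 hnd
    have e1 : c = cellOf T (T.entry c.1 c.2) := cellOf_unique hT hub.1 hub.2 hcm rfl
    have e2 : c' = cellOf T (T.entry c'.1 c'.2) := cellOf_unique hT hvb.1 hvb.2 hcm' rfl
    rw [← e1, ← e2] at hch
    exact hch.2
  · left
    rw [dstd_entry hT hcm, dstd_entry hT hcm']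
    exact hflt

lemma dstd_skey_le_iff (hT : IsSYT p T) {c c' : ℕ × ℕ} (hc : c ∈ cells p) (hc' : c' ∈ cells p) :
    skey (dstd T hT) c ≤ skey (dstd T hT) c' ↔ T.entry c.1 c.2 ≤ T.entry c'.1 c'.2 := by
  constructor
  · intro h
    by_contra hcon
    push_neg at hcon
    have := dstd_skey_lt hT hc' hc hcon
    exact absurd h (not_le.mpr this)
  · intro h
    rcases eq_or_lt_of_le h with heq | hlt
    · have : c = c' := entry_injOn hT c hc c' hc' heq
      rw [this]
    · exact le_of_lt (dstd_skey_lt hT hc hc' hlt)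

lemma std_dstd (hT : IsSYT p T) : std (dstd T hT) = T := by
  apply SSYT.ext'
  intro i j
  by_cases h : cellMem p i j
  · rw [std_entry _ h]
    have hmem : (i, j) ∈ cells p := (mem_cells p).mpr h
    have hfil : (cells p).filter (fun c' => skey (dstd T hT) c' ≤ skey (dstd T hT) (i, j)) =
        (cells p).filter (fun c' => tval T c' ≤ tval T (i, j)) := by
      apply Finset.filter_congr
      intro c' hc'
      exact dstd_skey_le_iff hT hc' hmem
    rw [rk, hfil, entry_rank hT hmem]
    rfl
  · rw [(std (dstd T hT)).zeros i j h, T.zeros i j h]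

end Inverses

/-- For a partition `p` of `n` and `1 ≤ m ≤ n`, the number of
quasi-Yamanouchi tableaux of shape `p` with maximum entry exactly `m` equals the number
of standard Young tableaux of shape `p` with exactly `m - 1` descents. -/
theorem statement3 (n m : ℕ) (p : Nat.Partition n) (hm1 : 1 ≤ m) (hmn : m ≤ n) :
    QYTeq p m =
      Nat.card {T : SSYT p // IsSYT p T ∧ (DesSet p T).ncard = m - 1} := by
  rw [QYTeq]
  refine Nat.card_congr
    ⟨fun x => ⟨std x.1, std_isSYT x.1, ?_⟩,
     fun y => ⟨dstd y.1 y.2.1, dstd_qy y.2.1, ?_, ?_⟩, ?_, ?_⟩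
  · obtain ⟨S, hqy, hbd, hmax⟩ := x
    rw [desSet_eq (std_isSYT S), Set.ncard_coe_finset]
    exact std_desF_card hqy hbd hmax hm1 hmn
  · have hcard : (desF y.1).card = m - 1 := by
      have hd := y.2.2
      rw [desSet_eq y.2.1, Set.ncard_coe_finset] at hd
      exact hd
    intro i j hc
    have := dstd_le y.2.1 hc
    omega
  · have hcard : (desF y.1).card = m - 1 := by
      have hd := y.2.2
      rw [desSet_eq y.2.1, Set.ncard_coe_finset] at hd
      exact hd
    obtain ⟨i, j, hc, he⟩ := dstd_max y.2.1 (le_trans hm1 hmn)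
    exact ⟨i, j, hc, by omega⟩
  · rintro ⟨S, hqy, hbd, hmax⟩
    exact Subtype.ext (dstd_std hqy hbd hmax hm1 hmn)
  · rintro ⟨T, hT, hd⟩
    exact Subtype.ext (std_dstd hT)
end
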